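/- arXiv:2101.11657 — 13 statements merged into one kernel-verified Lean document; each statement's English description precedes it below -/
import Mathlib

section
/- Let P be an N×N row-stochastic matrix (N ≥ 2) such that the pivot denominator S := ∑_{k=1}^{N−1} p_{N,k} is positive. Then the (N−1)×(N−1) matrix P⁽ᴺ⁻¹⁾ obtained by one GTH elimination step, p⁽ᴺ⁻¹⁾_{i,j} = p_{i,j} + p_{i,N} p_{N,j} / S for 1 ≤ i, j ≤ N−1, has nonnegative entries and each of its rows sums to 1; that is, P⁽ᴺ⁻¹⁾ is row-stochastic. -/
/-- A square real matrix is row-stochastic if all entries are nonnegative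
and each row sums to 1. -/
def RowStochastic {ι : Type*} [Fintype ι] (P : Matrix ι ι ℝ) : Prop :=
  (∀ i j, 0 ≤ P i j) ∧ ∀ i, ∑ j, P i j = 1

/-- One GTH elimination step: eliminate the last state of an `(n+1) × (n+1)` matrix,
producing an `n × n` matrix with entries
`p_{i,j} + p_{i,N} p_{N,j} / (∑_{k=1}^{N-1} p_{N,k})`. -/
noncomputable def gthStep {n : ℕ} (P : Matrix (Fin (n + 1)) (Fin (n + 1)) ℝ) :
    Matrix (Fin n) (Fin n) ℝ :=
  fun i j =>
    P i.castSucc j.castSucc +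
      P i.castSucc (Fin.last n) * P (Fin.last n) j.castSucc /
        ∑ k : Fin n, P (Fin.last n) k.castSucc

/-- One GTH elimination step applied to a row-stochastic matrix with positive pivot
denominator gives again a row-stochastic matrix. -/
theorem gthStep_rowStochastic {n : ℕ} (hn : 1 ≤ n)
    (P : Matrix (Fin (n + 1)) (Fin (n + 1)) ℝ) (hP : RowStochastic P)
    (hS : 0 < ∑ k : Fin n, P (Fin.last n) k.castSucc) :
    RowStochastic (gthStep P) := by
  obtain ⟨hnn, hrow⟩ := hP
  constructor
  · intro i j
    have : 0 ≤ P i.castSucc (Fin.last n) * P (Fin.last n) j.castSucc /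
        ∑ k : Fin n, P (Fin.last n) k.castSucc :=
      div_nonneg (mul_nonneg (hnn _ _) (hnn _ _)) hS.le
    exact add_nonneg (hnn _ _) this
  · intro i
    have hsum : ∑ j : Fin n, P i.castSucc j.castSucc = 1 - P i.castSucc (Fin.last n) := by
      have := hrow i.castSucc
      rw [Fin.sum_univ_castSucc] at this
      linarith
    simp only [gthStep, Finset.sum_add_distrib]
    rw [hsum, ← Finset.sum_div, ← Finset.mul_sum,
      mul_div_assoc, div_self hS.ne']
    ring
end

section
/- Let P be an N×N row-stochastic matrix (N ≥ 2) with ∑_{k=1}^{N−1} p_{N,k} > 0, and let π = (π_1, …, π_N) satisfy the stationary equations π_j = ∑_{i=1}^{N} π_i p_{i,j} for all j. Then the restricted vector (π_1, …, π_{N−1}) satisfies the eliminated system: π_j = ∑_{i=1}^{N−1} π_i p⁽ᴺ⁻¹⁾_{i,j} for all 1 ≤ j ≤ N−1, where p⁽ᴺ⁻¹⁾_{i,j} = p_{i,j} + p_{i,N} p_{N,j} / (∑_{k=1}^{N−1} p_{N,k}). -/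
/-- If `π` solves the stationary equations of `P`, then its restriction to the first
`N - 1` states solves the eliminated (GTH) system. -/
theorem gthStep_stationary {n : ℕ} (hn : 1 ≤ n)
    (P : Matrix (Fin (n + 1)) (Fin (n + 1)) ℝ) (hP : RowStochastic P)
    (hS : 0 < ∑ k : Fin n, P (Fin.last n) k.castSucc)
    (π : Fin (n + 1) → ℝ) (hπ : ∀ j, π j = ∑ i, π i * P i j) :
    ∀ j : Fin n, π j.castSucc = ∑ i : Fin n, π i.castSucc * gthStep P i j := by
  set S := ∑ k : Fin n, P (Fin.last n) k.castSucc with hSdef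
  have hSne : S ≠ 0 := ne_of_gt hS
  -- last-row sum: S + P N N = 1
  have hrow : S + P (Fin.last n) (Fin.last n) = 1 := by
    have := hP.2 (Fin.last n)
    rw [Fin.sum_univ_castSucc] at this
    linarith
  -- stationarity at last coordinate
  have hlast : π (Fin.last n) * S = ∑ i : Fin n, π i.castSucc * P i.castSucc (Fin.last n) := by
    have h := hπ (Fin.last n)
    rw [Fin.sum_univ_castSucc] at h
    have hPNN : P (Fin.last n) (Fin.last n) = 1 - S := by linarith
    rw [hPNN] at h
    nlinarith [h]
  intro j
  have h := hπ j.castSucc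
  rw [Fin.sum_univ_castSucc] at h
  have expand : ∑ i : Fin n, π i.castSucc * gthStep P i j =
      (∑ i : Fin n, π i.castSucc * P i.castSucc j.castSucc) +
      (∑ i : Fin n, π i.castSucc * P i.castSucc (Fin.last n)) *
        (P (Fin.last n) j.castSucc / S) := by
    rw [Finset.sum_mul, ← Finset.sum_add_distrib]
    apply Finset.sum_congr rfl; intro i _
    simp only [gthStep]
    ring
  rw [h, expand, ← hlast]
  field_simp
end

section
/- Let P be an N×N row-stochastic irreducible matrix with N ≥ 2. Then the pivot denominator ∑_{k=1}^{N−1} p_{N,k} is positive (equivalently p_{N,N} < 1, and the GTH elimination step is well defined), and the eliminated (N−1)×(N−1) matrix P⁽ᴺ⁻¹⁾ with entries p⁽ᴺ⁻¹⁾_{i,j} = p_{i,j} + p_{i,N} p_{N,j} / (∑_{k=1}^{N−1} p_{N,k}) is again irreducible. -/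
/-- A square matrix is irreducible if for all states `i, j` some power of the matrix
has a positive `(i, j)` entry. -/
def MatIrreducible {ι : Type*} [Fintype ι] [DecidableEq ι] (P : Matrix ι ι ℝ) : Prop :=
  ∀ i j, ∃ k : ℕ, 0 < (P ^ k) i j

lemma pow_entry_nonneg {m : ℕ} (P : Matrix (Fin m) (Fin m) ℝ)
    (h : ∀ i j, 0 ≤ P i j) : ∀ k i j, 0 ≤ (P ^ k) i j := by
  intro k
  induction k with
  | zero =>
    intro i j
    rw [pow_zero, Matrix.one_apply]
    split <;> norm_num
  | succ k ih =>
    intro i j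
    rw [pow_succ, Matrix.mul_apply]
    exact Finset.sum_nonneg fun x _ => mul_nonneg (ih i x) (h x j)

lemma exists_pos_of_sum_pos {α : Type*} [Fintype α] {f : α → ℝ}
    (h : 0 < ∑ x, f x) : ∃ x, 0 < f x := by
  by_contra hc
  push_neg at hc
  have : ∑ x, f x ≤ 0 := Finset.sum_nonpos fun x _ => hc x
  linarith

/-- For an irreducible row-stochastic matrix of size at least 2, the GTH pivot denominator
is positive (equivalently `p_{N,N} < 1`, so the elimination step is well defined), and the
eliminated matrix is again irreducible. -/
theorem gthStep_irreducible {n : ℕ} (hn : 1 ≤ n)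
    (P : Matrix (Fin (n + 1)) (Fin (n + 1)) ℝ) (hP : RowStochastic P)
    (hirr : MatIrreducible P) :
    0 < ∑ k : Fin n, P (Fin.last n) k.castSucc ∧
      P (Fin.last n) (Fin.last n) < 1 ∧
      MatIrreducible (gthStep P) := by
  obtain ⟨hnn, hrow⟩ := hP
  set s := ∑ k : Fin n, P (Fin.last n) k.castSucc with hs
  have hsnn : 0 ≤ s := Finset.sum_nonneg fun k _ => hnn _ _
  have hrowN : s + P (Fin.last n) (Fin.last n) = 1 := by
    rw [hs, ← Fin.sum_univ_castSucc]
    exact hrow _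
  have hspos : 0 < s := by
    rcases hsnn.lt_or_eq with h | h
    · exact h
    exfalso
    have hzero : ∀ j : Fin (n + 1), j ≠ Fin.last n → P (Fin.last n) j = 0 := by
      intro j hj
      obtain ⟨c, rfl⟩ := Fin.exists_castSucc_eq.mpr hj
      exact (Finset.sum_eq_zero_iff_of_nonneg (fun k _ => hnn _ _)).mp h.symm c
        (Finset.mem_univ c)
    have hzero' : ∀ k (j : Fin (n + 1)), j ≠ Fin.last n → (P ^ k) (Fin.last n) j = 0 := by
      intro k
      induction k with
      | zero =>
        intro j hj
        rw [pow_zero, Matrix.one_apply_ne (Ne.symm hj)]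
      | succ k ih =>
        intro j hj
        rw [pow_succ', Matrix.mul_apply]
        apply Finset.sum_eq_zero
        intro x _
        by_cases hx : x = Fin.last n
        · rw [hx, ih j hj, mul_zero]
        · rw [hzero x hx, zero_mul]
    have h0 : (⟨0, by omega⟩ : Fin (n + 1)) ≠ Fin.last n := by
      simp [Fin.ext_iff, Fin.last]
      omega
    obtain ⟨k, hk⟩ := hirr (Fin.last n) ⟨0, by omega⟩
    rw [hzero' k _ h0] at hk
    exact lt_irrefl _ hk
  refine ⟨hspos, by linarith, ?_⟩
  set Q := gthStep P with hQdef
  have hQnn : ∀ a b, 0 ≤ Q a b := by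
    intro a b
    exact add_nonneg (hnn _ _) (div_nonneg (mul_nonneg (hnn _ _) (hnn _ _)) hsnn)
  have hQpow := pow_entry_nonneg Q hQnn
  have hPpow := pow_entry_nonneg P hnn
  have hchain : ∀ (a b c : Fin n) (r : ℕ), 0 < Q a b → 0 < (Q ^ r) b c →
      0 < (Q ^ (r + 1)) a c := by
    intro a b c r hab hbc
    rw [pow_succ', Matrix.mul_apply]
    calc (0:ℝ) < Q a b * (Q ^ r) b c := mul_pos hab hbc
      _ ≤ ∑ x, Q a x * (Q ^ r) x c :=
        Finset.single_le_sum (fun x _ => mul_nonneg (hQnn a x) (hQpow r x c))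
          (Finset.mem_univ b)
  have hexit : ∀ k (j : Fin n), 0 < (P ^ k) (Fin.last n) j.castSucc →
      ∃ y : Fin n, 0 < P (Fin.last n) y.castSucc ∧
        ∃ m < k, 0 < (P ^ m) y.castSucc j.castSucc := by
    intro k
    induction k with
    | zero =>
      intro j h
      rw [pow_zero, Matrix.one_apply_ne (Fin.castSucc_lt_last j).ne'] at h
      exact absurd h (lt_irrefl 0)
    | succ k ih =>
      intro j h
      rw [pow_succ', Matrix.mul_apply] at h
      obtain ⟨x, hx⟩ := exists_pos_of_sum_pos h
      have h1 : 0 < P (Fin.last n) x := by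
        rcases mul_pos_iff.mp hx with ⟨h1, _⟩ | ⟨h1, _⟩
        · exact h1
        · exact absurd h1 (not_lt.mpr (hnn _ _))
      have h2 : 0 < (P ^ k) x j.castSucc := by
        rcases mul_pos_iff.mp hx with ⟨_, h2⟩ | ⟨_, h2⟩
        · exact h2
        · exact absurd h2 (not_lt.mpr (hPpow _ _ _))
      by_cases hxl : x = Fin.last n
      · subst hxl
        obtain ⟨y, hy, m, hm, hmp⟩ := ih j h2
        exact ⟨y, hy, m, Nat.lt_succ_of_lt hm, hmp⟩
      · obtain ⟨c, rfl⟩ := Fin.exists_castSucc_eq.mpr hxl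
        exact ⟨c, h1, k, Nat.lt_succ_self k, h2⟩
  have main : ∀ k (i j : Fin n), 0 < (P ^ k) i.castSucc j.castSucc →
      ∃ m, 0 < (Q ^ m) i j := by
    intro k
    induction k using Nat.strong_induction_on with
    | _ k ih =>
      match k with
      | 0 =>
        intro i j hk
        rw [pow_zero, Matrix.one_apply] at hk
        by_cases hij : i.castSucc = j.castSucc
        · refine ⟨0, ?_⟩
          have : i = j := Fin.castSucc_injective n hij
          subst this
          rw [pow_zero, Matrix.one_apply_eq]
          norm_num
        · rw [if_neg hij] at hk
          exact absurd hk (lt_irrefl 0)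
      | k + 1 =>
        intro i j hk
        rw [pow_succ', Matrix.mul_apply] at hk
        obtain ⟨x, hx⟩ := exists_pos_of_sum_pos hk
        have h1 : 0 < P i.castSucc x := by
          rcases mul_pos_iff.mp hx with ⟨h1, _⟩ | ⟨h1, _⟩
          · exact h1
          · exact absurd h1 (not_lt.mpr (hnn _ _))
        have h2 : 0 < (P ^ k) x j.castSucc := by
          rcases mul_pos_iff.mp hx with ⟨_, h2⟩ | ⟨_, h2⟩
          · exact h2
          · exact absurd h2 (not_lt.mpr (hPpow _ _ _))
        by_cases hxl : x = Fin.last n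
        · subst hxl
          obtain ⟨y, hy, m, hm, hmp⟩ := hexit k j h2
          obtain ⟨r, hr⟩ := ih m (Nat.lt_succ_of_lt hm) y j hmp
          have hQiy : 0 < Q i y := by
            have : 0 < P i.castSucc (Fin.last n) * P (Fin.last n) y.castSucc / s :=
              div_pos (mul_pos h1 hy) hspos
            exact add_pos_of_nonneg_of_pos (hnn _ _) this
          exact ⟨r + 1, hchain i y j r hQiy hr⟩
        · obtain ⟨c, rfl⟩ := Fin.exists_castSucc_eq.mpr hxl
          obtain ⟨r, hr⟩ := ih k (Nat.lt_succ_self k) c j h2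
          have hQic : 0 < Q i c :=
            add_pos_of_pos_of_nonneg h1
              (div_nonneg (mul_nonneg (hnn _ _) (hnn _ _)) hsnn)
          exact ⟨r + 1, hchain i c j r hQic hr⟩
  intro i j
  obtain ⟨k, hk⟩ := hirr i.castSucc j.castSucc
  exact main k i j hk
end

section
/- Let P be an N×N row-stochastic irreducible matrix, let π be a stationary probability vector of P (π = πP, entries nonnegative, summing to 1), and let the GTH recursion matrices P⁽ⁿ⁾ be well defined (each denominator ∑_{k=1}^{n−1} p⁽ⁿ⁾_{n,k} positive for 2 ≤ n ≤ N). Then π_1 > 0 and the ratios r_j := π_j / π_1 satisfy the GTH back-substitution recursion: r_1 = 1 and, for every 2 ≤ j ≤ N, r_j · (∑_{k=1}^{j−1} p⁽ʲ⁾_{j,k}) = ∑_{i=1}^{j−1} r_i p⁽ʲ⁾_{i,j}. -/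
/-- The GTH (censoring) recursion: `gthFam P N = P` and
`gthFam P (n-1) = gthStep (gthFam P n)`, i.e. the matrices `P⁽ⁿ⁾` of the GTH algorithm
(states `1, …, n` correspond to the indices of `Fin n`). -/
noncomputable def gthFam : {N : ℕ} → Matrix (Fin N) (Fin N) ℝ → (n : ℕ) →
    Matrix (Fin n) (Fin n) ℝ
  | 0, _, _ => 0
  | M + 1, P, n =>
    if h : n = M + 1 then (by subst h; exact P) else gthFam (gthStep P) n

lemma gthFam_self : ∀ {N : ℕ} (P : Matrix (Fin N) (Fin N) ℝ), gthFam P N = P := by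
  intro N P
  cases N with
  | zero => ext i j; exact i.elim0
  | succ M => simp [gthFam]

lemma gthFam_succ : ∀ {N : ℕ} (P : Matrix (Fin N) (Fin N) ℝ) {n : ℕ}, n + 1 ≤ N →
    gthFam P n = gthStep (gthFam P (n + 1)) := by
  intro N
  induction N with
  | zero => intro P n h; omega
  | succ M ih =>
    intro P n h
    by_cases hn : n = M
    · subst hn
      rw [gthFam_self]
      have : gthFam P n = gthFam (gthStep P) n := by
        rw [gthFam]; rw [dif_neg (by omega)]
      rw [this, gthFam_self]
    · have h1 : gthFam P n = gthFam (gthStep P) n := by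
        rw [gthFam]; rw [dif_neg (by omega)]
      have h2 : gthFam P (n + 1) = gthFam (gthStep P) (n + 1) := by
        rw [gthFam]; rw [dif_neg (by omega)]
      rw [h1, h2, ih (gthStep P) (by omega)]

lemma gth_rowsum_step {n : ℕ} (Q : Matrix (Fin (n + 1)) (Fin (n + 1)) ℝ)
    (hrow : ∀ i, ∑ j, Q i j = 1)
    (hS : (∑ k : Fin n, Q (Fin.last n) k.castSucc) ≠ 0) (i : Fin n) :
    ∑ j, gthStep Q i j = 1 := by
  set S := ∑ k : Fin n, Q (Fin.last n) k.castSucc with hSdef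
  have h1 : ∑ j : Fin n, gthStep Q i j =
      (∑ j : Fin n, Q i.castSucc j.castSucc) + Q i.castSucc (Fin.last n) * S / S := by
    rw [show (∑ j : Fin n, gthStep Q i j) = ∑ j : Fin n,
        (Q i.castSucc j.castSucc + Q i.castSucc (Fin.last n) * (Q (Fin.last n) j.castSucc / S))
      from Finset.sum_congr rfl fun j _ => by simp only [gthStep, ← hSdef]; ring,
      Finset.sum_add_distrib, ← Finset.mul_sum, ← Finset.sum_div, ← hSdef, mul_div_assoc]
  have h2 : (∑ j : Fin n, Q i.castSucc j.castSucc) + Q i.castSucc (Fin.last n) = 1 := by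
    rw [← Fin.sum_univ_castSucc]; exact hrow i.castSucc
  rw [h1, mul_div_assoc, div_self hS, mul_one]
  linarith

lemma gth_stat_step {n : ℕ} (Q : Matrix (Fin (n + 1)) (Fin (n + 1)) ℝ)
    (ρ : Fin (n + 1) → ℝ) (hstat : ∀ j, ρ j = ∑ i, ρ i * Q i j)
    (hrowlast : ∑ j, Q (Fin.last n) j = 1)
    (hS : (∑ k : Fin n, Q (Fin.last n) k.castSucc) ≠ 0) (j : Fin n) :
    ρ j.castSucc = ∑ i : Fin n, ρ i.castSucc * gthStep Q i j := by
  set S := ∑ k : Fin n, Q (Fin.last n) k.castSucc with hSdef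
  have hSval : S = 1 - Q (Fin.last n) (Fin.last n) := by
    have := hrowlast
    rw [Fin.sum_univ_castSucc] at this
    rw [hSdef]; linarith
  have hB : ∑ i : Fin n, ρ i.castSucc * Q i.castSucc (Fin.last n) = ρ (Fin.last n) * S := by
    have := hstat (Fin.last n)
    rw [Fin.sum_univ_castSucc] at this
    rw [hSval]; ring_nf; linarith [this]
  have hA : ∑ i : Fin n, ρ i.castSucc * Q i.castSucc j.castSucc =
      ρ j.castSucc - ρ (Fin.last n) * Q (Fin.last n) j.castSucc := by
    have := hstat j.castSucc
    rw [Fin.sum_univ_castSucc] at this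
    linarith
  rw [show (∑ i : Fin n, ρ i.castSucc * gthStep Q i j) = ∑ i : Fin n,
      (ρ i.castSucc * Q i.castSucc j.castSucc +
        ρ i.castSucc * Q i.castSucc (Fin.last n) * (Q (Fin.last n) j.castSucc / S))
    from Finset.sum_congr rfl fun i _ => by simp only [gthStep, ← hSdef]; ring,
    Finset.sum_add_distrib, ← Finset.sum_mul, hA, hB]
  field_simp
  ring


/-- For an irreducible row-stochastic matrix with stationary probability vector `π`
and well-defined GTH recursion, `π_1 > 0` and the ratios `r_j = π_j / π_1` satisfy the
GTH back-substitution recursion `r_j ⬝ S_j = ∑_{i<j} r_i p⁽ʲ⁾_{i,j}`. -/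
theorem gth_back_substitution_ratios {N : ℕ} (h0 : 0 < N)
    (P : Matrix (Fin N) (Fin N) ℝ) (hP : RowStochastic P) (hirr : MatIrreducible P)
    (π : Fin N → ℝ) (hnn : ∀ j, 0 ≤ π j) (hsum : ∑ j, π j = 1)
    (hstat : ∀ j, π j = ∑ i, π i * P i j)
    (hden : ∀ m : ℕ, 1 ≤ m → m + 1 ≤ N →
      0 < ∑ k : Fin m, gthFam P (m + 1) (Fin.last m) k.castSucc) :
    0 < π ⟨0, h0⟩ ∧
      π ⟨0, h0⟩ / π ⟨0, h0⟩ = 1 ∧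
      ∀ (m : ℕ), 1 ≤ m → ∀ (h2 : m + 1 ≤ N),
        π (Fin.castLE h2 (Fin.last m)) / π ⟨0, h0⟩ *
            ∑ k : Fin m, gthFam P (m + 1) (Fin.last m) k.castSucc =
          ∑ i : Fin m, π (Fin.castLE h2 i.castSucc) / π ⟨0, h0⟩ *
            gthFam P (m + 1) i.castSucc (Fin.last m) := by
  -- π ⟨0, h0⟩ > 0
  have hpow_nn : ∀ k : ℕ, ∀ i j, 0 ≤ (P ^ k) i j := by
    intro k
    induction k with
    | zero => intro i j; simp [Matrix.one_apply]; split <;> norm_num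
    | succ k ihk =>
      intro i j
      rw [pow_succ, Matrix.mul_apply]
      exact Finset.sum_nonneg fun l _ => mul_nonneg (ihk i l) (hP.1 l j)
  have hpow_stat : ∀ k : ℕ, ∀ j, π j = ∑ i, π i * (P ^ k) i j := by
    intro k
    induction k with
    | zero => intro j; simp [Matrix.one_apply]
    | succ k ihk =>
      intro j
      rw [pow_succ]
      calc π j = ∑ l, π l * P l j := hstat j
        _ = ∑ l, (∑ i, π i * (P ^ k) i l) * P l j := by
            refine Finset.sum_congr rfl fun l _ => by rw [← ihk l]
        _ = ∑ l, ∑ i, π i * (P ^ k) i l * P l j := by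
            refine Finset.sum_congr rfl fun l _ => by rw [Finset.sum_mul]
        _ = ∑ i, ∑ l, π i * (P ^ k) i l * P l j := Finset.sum_comm
        _ = ∑ i, π i * (P ^ k * P) i j := by
            refine Finset.sum_congr rfl fun i _ => ?_
            rw [Matrix.mul_apply, Finset.mul_sum]
            refine Finset.sum_congr rfl fun l _ => by ring
  have hπ0 : 0 < π ⟨0, h0⟩ := by
    obtain ⟨j, hj⟩ : ∃ j, 0 < π j := by
      by_contra hcon
      push_neg at hcon
      have : ∀ j, π j = 0 := fun j => le_antisymm (hcon j) (hnn j)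
      simp [this] at hsum
    obtain ⟨k, hk⟩ := hirr j ⟨0, h0⟩
    have h1 : π j * (P ^ k) j ⟨0, h0⟩ ≤ ∑ i, π i * (P ^ k) i ⟨0, h0⟩ :=
      Finset.single_le_sum (f := fun i => π i * (P ^ k) i ⟨0, h0⟩)
        (fun i _ => mul_nonneg (hnn i) (hpow_nn k i _)) (Finset.mem_univ j)
    have h2 : 0 < π j * (P ^ k) j ⟨0, h0⟩ := mul_pos hj hk
    rw [hpow_stat k ⟨0, h0⟩]
    linarith
  -- key invariant for the censored chain
  have key : ∀ d n : ℕ, ∀ hn : n + d = N,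
      (∀ i : Fin n, ∑ j, gthFam P n i j = 1) ∧
      ∀ j : Fin n, π (Fin.castLE (by omega) j) =
        ∑ i : Fin n, π (Fin.castLE (by omega : n ≤ N) i) * gthFam P n i j := by
    intro d
    induction d with
    | zero =>
      intro n hn
      subst hn
      simp only [Nat.add_zero] at *
      rw [gthFam_self]
      constructor
      · exact hP.2
      · intro j
        simpa using hstat j
    | succ d ih =>
      intro n hn
      cases n with
      | zero => exact ⟨fun i => i.elim0, fun j => j.elim0⟩
      | succ p =>
        have hp2 : p + 2 ≤ N := by omega
        obtain ⟨ihrow, ihstat⟩ := ih (p + 2) (by omega)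
        have hS : (∑ k : Fin (p + 1),
            gthFam P (p + 2) (Fin.last (p + 1)) k.castSucc) ≠ 0 :=
          ne_of_gt (hden (p + 1) (by omega) (by omega))
        have hfam : gthFam P (p + 1) = gthStep (gthFam P (p + 2)) :=
          gthFam_succ P hp2
        constructor
        · intro i
          rw [hfam]
          exact gth_rowsum_step (gthFam P (p + 2)) ihrow hS i
        · intro j
          rw [hfam]
          exact gth_stat_step (gthFam P (p + 2))
            (fun i => π (Fin.castLE hp2 i)) ihstat (ihrow (Fin.last (p + 1))) hS j
  refine ⟨hπ0, div_self (ne_of_gt hπ0), ?_⟩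
  intro m hm h2
  obtain ⟨krow, kstat⟩ := key (N - (m + 1)) (m + 1) (by omega)
  set Q := gthFam P (m + 1) with hQ
  set S := ∑ k : Fin m, Q (Fin.last m) k.castSucc with hSdef
  have hSlast : S + Q (Fin.last m) (Fin.last m) = 1 := by
    have := krow (Fin.last m)
    rw [Fin.sum_univ_castSucc] at this
    rw [hSdef]; linarith
  have hstatlast := kstat (Fin.last m)
  rw [Fin.sum_univ_castSucc] at hstatlast
  have main : π (Fin.castLE h2 (Fin.last m)) * S =
      ∑ i : Fin m, π (Fin.castLE h2 i.castSucc) * Q i.castSucc (Fin.last m) := by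
    have h3 : S = 1 - Q (Fin.last m) (Fin.last m) := by linarith
    rw [h3]
    have h4 : π (Fin.castLE h2 (Fin.last m)) =
        ∑ i : Fin m, π (Fin.castLE h2 i.castSucc) * Q i.castSucc (Fin.last m) +
          π (Fin.castLE h2 (Fin.last m)) * Q (Fin.last m) (Fin.last m) := hstatlast
    ring_nf
    ring_nf at h4
    linarith
  calc π (Fin.castLE h2 (Fin.last m)) / π ⟨0, h0⟩ * S
      = π (Fin.castLE h2 (Fin.last m)) * S / π ⟨0, h0⟩ := by
        rw [div_mul_eq_mul_div]
    _ = (∑ i : Fin m, π (Fin.castLE h2 i.castSucc) * Q i.castSucc (Fin.last m)) /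
          π ⟨0, h0⟩ := by rw [main]
    _ = ∑ i : Fin m, π (Fin.castLE h2 i.castSucc) / π ⟨0, h0⟩ *
          Q i.castSucc (Fin.last m) := by
        rw [Finset.sum_div]
        exact Finset.sum_congr rfl fun i _ => by rw [div_mul_eq_mul_div]
end

section
/- Let P be an N×N row-stochastic irreducible matrix and let E ⊆ Fin N be nonempty with nonempty complement, with blocks T, U, D, Q of P with respect to E and Eᶜ. Then I − Q is invertible, every entry of (I − Q)⁻¹ is nonnegative, and the finite censored matrix P^E := T + U (I − Q)⁻¹ D is row-stochastic (nonnegative entries, each row summing to 1). -/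
open Matrix Finset

lemma rowStochastic_pow {ι : Type*} [Fintype ι] [DecidableEq ι]
    {P : Matrix ι ι ℝ} (hP : RowStochastic P) (k : ℕ) : RowStochastic (P ^ k) := by
  induction k with
  | zero =>
    refine ⟨fun i j => ?_, fun i => ?_⟩
    · simp only [pow_zero, Matrix.one_apply]
      split <;> norm_num
    · simp [pow_zero, Matrix.one_apply, Finset.sum_ite_eq]
  | succ k ih =>
    rw [pow_succ]
    refine ⟨fun i j => ?_, fun i => ?_⟩
    · rw [Matrix.mul_apply]
      exact Finset.sum_nonneg fun l _ => mul_nonneg (ih.1 i l) (hP.1 l j)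
    · simp_rw [Matrix.mul_apply]
      rw [Finset.sum_comm]
      simp_rw [← Finset.mul_sum, hP.2, mul_one]
      exact ih.2 i

lemma pow_entry_nonneg_s5 {ι : Type*} [Fintype ι] [DecidableEq ι]
    {P : Matrix ι ι ℝ} (hnn : ∀ i j, 0 ≤ P i j) (k : ℕ) (i j : ι) : 0 ≤ (P ^ k) i j := by
  induction k generalizing i j with
  | zero => simp only [pow_zero, Matrix.one_apply]; split <;> norm_num
  | succ k ih =>
    rw [pow_succ, Matrix.mul_apply]
    exact Finset.sum_nonneg fun l _ => mul_nonneg (ih i l) (hnn l j)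

/-- Entries of powers of a block are nonneg and dominated by entries of powers of `P`. -/
lemma block_pow_le {N : ℕ} {P : Matrix (Fin N) (Fin N) ℝ} (hnn : ∀ i j, 0 ≤ P i j)
    (E : Finset (Fin N)) (k : ℕ) (i j : {a : Fin N // a ∉ E}) :
    0 ≤ ((P.toBlock (· ∉ E) (· ∉ E)) ^ k) i j ∧
      ((P.toBlock (· ∉ E) (· ∉ E)) ^ k) i j ≤ (P ^ k) i.1 j.1 := by
  induction k generalizing i j with
  | zero =>
    simp only [pow_zero, Matrix.one_apply]
    constructor
    · split <;> norm_num
    · rcases eq_or_ne i j with rfl | h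
      · simp
      · have : i.1 ≠ j.1 := fun hh => h (Subtype.ext hh)
        simp [h, this]
  | succ k ih =>
    rw [pow_succ, pow_succ, Matrix.mul_apply, Matrix.mul_apply]
    have hQnn : ∀ l, 0 ≤ ((P.toBlock (· ∉ E) (· ∉ E)) ^ k) i l * P.toBlock (· ∉ E) (· ∉ E) l j :=
      fun l => mul_nonneg (ih i l).1 (hnn l.1 j.1)
    refine ⟨Finset.sum_nonneg fun l _ => hQnn l, ?_⟩
    have step1 : ∑ l : {a : Fin N // a ∉ E},
        ((P.toBlock (· ∉ E) (· ∉ E)) ^ k) i l * P.toBlock (· ∉ E) (· ∉ E) l j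
        ≤ ∑ l : {a : Fin N // a ∉ E}, (P ^ k) i.1 l.1 * P l.1 j.1 :=
      Finset.sum_le_sum fun l _ =>
        mul_le_mul_of_nonneg_right (ih i l).2 (hnn l.1 j.1)
    refine step1.trans ?_
    have hsub := Finset.sum_subtype (p := fun a : Fin N => a ∉ E) (F := inferInstance) Eᶜ
      (fun x => Finset.mem_compl) (fun l => (P ^ k) i.1 l * P l j.1)
    rw [← hsub]
    refine Finset.sum_le_sum_of_subset_of_nonneg (Finset.subset_univ _) fun l _ _ => ?_
    exact mul_nonneg (pow_entry_nonneg_s5 hnn k i.1 l) (hnn l j.1)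

/-- For an irreducible row-stochastic matrix `P` and a nonempty censoring set `E` with
nonempty complement, with blocks `T = P.toBlock (· ∈ E) (· ∈ E)`,
`U = P.toBlock (· ∈ E) (· ∉ E)`, `D = P.toBlock (· ∉ E) (· ∈ E)` and
`Q = P.toBlock (· ∉ E) (· ∉ E)`, the matrix `I - Q` is invertible, its inverse has
nonnegative entries, and the censored matrix `T + U (I - Q)⁻¹ D` is row-stochastic. -/
theorem censored_matrix_rowStochastic {N : ℕ}
    (P : Matrix (Fin N) (Fin N) ℝ) (hP : RowStochastic P) (hirr : MatIrreducible P)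
    (E : Finset (Fin N)) (hE : E.Nonempty) (hEc : Eᶜ.Nonempty) :
    IsUnit (1 - P.toBlock (· ∉ E) (· ∉ E)) ∧
      (∀ i j, 0 ≤ (1 - P.toBlock (· ∉ E) (· ∉ E))⁻¹ i j) ∧
      RowStochastic
        (P.toBlock (· ∈ E) (· ∈ E) +
          P.toBlock (· ∈ E) (· ∉ E) * (1 - P.toBlock (· ∉ E) (· ∉ E))⁻¹ *
            P.toBlock (· ∉ E) (· ∈ E)) := by
  classical
  set Q : Matrix {a : Fin N // a ∉ E} {a : Fin N // a ∉ E} ℝ := P.toBlock (· ∉ E) (· ∉ E) with hQdef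
  have hnn := hP.1
  have hQnn : ∀ i j, 0 ≤ Q i j := fun i j => hnn i.1 j.1
  -- row sums of powers of Q are at most 1
  have hQrow : ∀ (k : ℕ) (i : {a : Fin N // a ∉ E}), ∑ j, (Q ^ k) i j ≤ 1 := by
    intro k i
    have h1 : ∑ j, (Q ^ k) i j ≤ ∑ j : {a : Fin N // a ∉ E}, (P ^ k) i.1 j.1 :=
      Finset.sum_le_sum fun j _ => (block_pow_le hnn E k i j).2
    have h2 : ∑ j : {a : Fin N // a ∉ E}, (P ^ k) i.1 j.1 = ∑ j ∈ Eᶜ, (P ^ k) i.1 j :=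
      (Finset.sum_subtype (p := fun a : Fin N => a ∉ E) (F := inferInstance) Eᶜ
        (fun x => Finset.mem_compl) _).symm
    have h3 : ∑ j ∈ Eᶜ, (P ^ k) i.1 j ≤ ∑ j, (P ^ k) i.1 j :=
      Finset.sum_le_sum_of_subset_of_nonneg (Finset.subset_univ _)
        (fun j _ _ => pow_entry_nonneg_s5 hnn k i.1 j)
    rw [(rowStochastic_pow hP k).2 i.1] at h3
    linarith [h1, h2.le, h2.ge]
  -- row sums of powers of Q are antitone in the exponent
  have hmono : ∀ (i : {a : Fin N // a ∉ E}), Antitone fun k => ∑ j, (Q ^ k) i j := by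
    intro i
    refine antitone_nat_of_succ_le fun k => ?_
    calc ∑ j, (Q ^ (k + 1)) i j = ∑ j, ∑ l, (Q ^ k) i l * Q l j := by
          simp_rw [pow_succ, Matrix.mul_apply]
      _ = ∑ l, (Q ^ k) i l * ∑ j, Q l j := by
          rw [Finset.sum_comm]; simp_rw [Finset.mul_sum]
      _ ≤ ∑ l, (Q ^ k) i l * 1 :=
          Finset.sum_le_sum fun l _ => mul_le_mul_of_nonneg_left (by simpa using hQrow 1 l) (block_pow_le hnn E k i l).1
      _ = ∑ l, (Q ^ k) i l := by simp
  -- for each row, some power has row sum < 1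
  have hstrict : ∀ (i : {a : Fin N // a ∉ E}), ∃ k, ∑ j, (Q ^ k) i j < 1 := by
    intro i
    obtain ⟨e, he⟩ := hE
    obtain ⟨k, hk⟩ := hirr i.1 e
    refine ⟨k, ?_⟩
    have h1 : ∑ j, (Q ^ k) i j ≤ ∑ j : {a : Fin N // a ∉ E}, (P ^ k) i.1 j.1 :=
      Finset.sum_le_sum fun j _ => (block_pow_le hnn E k i j).2
    have h2 : ∑ j : {a : Fin N // a ∉ E}, (P ^ k) i.1 j.1 = ∑ j ∈ Eᶜ, (P ^ k) i.1 j :=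
      (Finset.sum_subtype (p := fun a : Fin N => a ∉ E) (F := inferInstance) Eᶜ
        (fun x => Finset.mem_compl) _).symm
    have hsplit : ∑ j ∈ E, (P ^ k) i.1 j + ∑ j ∈ Eᶜ, (P ^ k) i.1 j = 1 := by
      rw [Finset.sum_add_sum_compl]; exact (rowStochastic_pow hP k).2 i.1
    have hsing : (P ^ k) i.1 e ≤ ∑ j ∈ E, (P ^ k) i.1 j :=
      Finset.single_le_sum (fun j _ => pow_entry_nonneg_s5 hnn k i.1 j) he
    linarith
  -- a single power with all row sums < 1
  obtain ⟨m, hm⟩ : ∃ m, ∀ i : {a : Fin N // a ∉ E}, ∑ j, (Q ^ m) i j < 1 := by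
    choose K hK using hstrict
    refine ⟨Finset.univ.sup K, fun i => ?_⟩
    exact lt_of_le_of_lt (hmono i (Finset.le_sup (Finset.mem_univ i))) (hK i)
  -- set up the L∞ operator norm
  letI instN : NormedRing (Matrix {a : Fin N // a ∉ E} {a : Fin N // a ∉ E} ℝ) :=
    Matrix.linftyOpNormedRing
  letI instA : NormedAlgebra ℝ (Matrix {a : Fin N // a ∉ E} {a : Fin N // a ∉ E} ℝ) :=
    Matrix.linftyOpNormedAlgebra
  haveI : CompleteSpace (Matrix {a : Fin N // a ∉ E} {a : Fin N // a ∉ E} ℝ) :=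
    FiniteDimensional.complete ℝ _
  have hnorm : ‖Q ^ m‖ < 1 := by
    rw [Matrix.linfty_opNorm_def]
    have : ((Finset.univ : Finset {a : Fin N // a ∉ E}).sup
        fun i => ∑ j, ‖(Q ^ m) i j‖₊ : NNReal) < 1 := by
      rw [Finset.sup_lt_iff (by norm_num : (⊥ : NNReal) < 1)]
      intro i _
      rw [← NNReal.coe_lt_coe]
      push_cast
      have : ∀ j, ((‖(Q ^ m) i j‖₊ : NNReal) : ℝ) = (Q ^ m) i j := fun j => by
        rw [coe_nnnorm, Real.norm_eq_abs, abs_of_nonneg (block_pow_le hnn E m i j).1]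
      calc (∑ j, ((‖(Q ^ m) i j‖₊ : NNReal) : ℝ)) = ∑ j, (Q ^ m) i j :=
            Finset.sum_congr rfl fun j _ => this j
        _ < 1 := hm i
    exact_mod_cast this
  -- geometric series for (1 - Q^m)⁻¹
  have hsum : Summable fun n : ℕ => (Q ^ m) ^ n := summable_geometric_of_norm_lt_one hnorm
  set W : Matrix {a : Fin N // a ∉ E} {a : Fin N // a ∉ E} ℝ := ∑' n : ℕ, (Q ^ m) ^ n with hWdef
  have hW : (1 - Q ^ m) * W = 1 := mul_neg_geom_series _ hnorm
  have hdet1 : (1 - Q ^ m).det * W.det = 1 := by rw [← Matrix.det_mul, hW, Matrix.det_one]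
  have hunit_m : IsUnit (1 - Q ^ m) :=
    (Matrix.isUnit_iff_isUnit_det _).mpr (IsUnit.of_mul_eq_one _ hdet1)
  -- geometric sum identity
  set S : Matrix {a : Fin N // a ∉ E} {a : Fin N // a ∉ E} ℝ := ∑ k ∈ Finset.range m, Q ^ k
    with hSdef
  have hc : Q * S = S * Q := by
    rw [hSdef, Finset.mul_sum, Finset.sum_mul]
    exact Finset.sum_congr rfl fun k _ => (pow_succ Q k ▸ (pow_succ' Q k).symm)
  have hgeom : (1 - Q) * S = 1 - Q ^ m := by
    calc (1 - Q) * S = S - Q * S := by rw [sub_mul, one_mul]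
      _ = S - S * Q := by rw [hc]
      _ = -(S * (Q - 1)) := by rw [mul_sub, mul_one, neg_sub]
      _ = -(Q ^ m - 1) := by rw [hSdef, geom_sum_mul]
      _ = 1 - Q ^ m := by rw [neg_sub]
  -- invertibility of 1 - Q
  have hunit : IsUnit (1 - Q) := by
    have hd : IsUnit (1 - Q ^ m).det := (Matrix.isUnit_iff_isUnit_det _).mp hunit_m
    rw [← hgeom, Matrix.det_mul] at hd
    exact (Matrix.isUnit_iff_isUnit_det _).mpr (isUnit_of_mul_isUnit_left hd)
  -- entries of W are nonnegative
  have hWnn : ∀ i j, 0 ≤ W i j := by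
    intro i j
    let e : Matrix {a : Fin N // a ∉ E} {a : Fin N // a ∉ E} ℝ →ₗ[ℝ] ℝ :=
      { toFun := fun A => A i j, map_add' := fun _ _ => rfl, map_smul' := fun _ _ => rfl }
    have he : Continuous e := LinearMap.continuous_of_finiteDimensional e
    have hmap : HasSum (fun n : ℕ => e ((Q ^ m) ^ n)) (e W) :=
      (hsum.hasSum).map e.toAddMonoidHom he
    have : e W = ∑' n : ℕ, ((Q ^ m) ^ n) i j := hmap.tsum_eq.symm
    have hval : W i j = ∑' n : ℕ, ((Q ^ m) ^ n) i j := this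
    rw [hval]
    refine tsum_nonneg fun n => ?_
    rw [← pow_mul]
    exact (block_pow_le hnn E (m * n) i j).1
  -- the inverse of 1 - Q equals S * W and has nonnegative entries
  have hSWinv : (1 - Q)⁻¹ = S * W := by
    refine Matrix.inv_eq_right_inv ?_
    rw [← Matrix.mul_assoc, hgeom, hW]
  have hSnn : ∀ i j, 0 ≤ S i j := by
    intro i j
    rw [hSdef, Matrix.sum_apply]
    exact Finset.sum_nonneg fun k _ => (block_pow_le hnn E k i j).1
  have hBnn : ∀ i j, 0 ≤ (1 - Q)⁻¹ i j := by
    intro i j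
    rw [hSWinv, Matrix.mul_apply]
    exact Finset.sum_nonneg fun l _ => mul_nonneg (hSnn i l) (hWnn l j)
  refine ⟨hunit, hBnn, ?_⟩
  set B : Matrix {a : Fin N // a ∉ E} {a : Fin N // a ∉ E} ℝ := (1 - Q)⁻¹ with hBdef
  set T : Matrix {a : Fin N // a ∈ E} {a : Fin N // a ∈ E} ℝ := P.toBlock (· ∈ E) (· ∈ E)
    with hTdef
  set U : Matrix {a : Fin N // a ∈ E} {a : Fin N // a ∉ E} ℝ := P.toBlock (· ∈ E) (· ∉ E)
    with hUdef
  set D : Matrix {a : Fin N // a ∉ E} {a : Fin N // a ∈ E} ℝ := P.toBlock (· ∉ E) (· ∈ E)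
    with hDdef
  have hTnn : ∀ i j, 0 ≤ T i j := fun i j => hnn i.1 j.1
  have hUnn : ∀ i j, 0 ≤ U i j := fun i j => hnn i.1 j.1
  have hDnn : ∀ i j, 0 ≤ D i j := fun i j => hnn i.1 j.1
  constructor
  · intro i j
    rw [Matrix.add_apply]
    have h1 : 0 ≤ (U * B * D) i j := by
      rw [Matrix.mul_apply]
      refine Finset.sum_nonneg fun b _ => mul_nonneg ?_ (hDnn b j)
      rw [Matrix.mul_apply]
      exact Finset.sum_nonneg fun a _ => mul_nonneg (hUnn i a) (hBnn a b)
    exact add_nonneg (hTnn i j) h1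
  · intro i
    -- the key vector identity
    have hDone : D *ᵥ (fun _ => (1 : ℝ)) = (1 - Q) *ᵥ (fun _ => (1 : ℝ)) := by
      funext l
      have hsplit : ∑ j ∈ E, P l.1 j + ∑ j ∈ Eᶜ, P l.1 j = 1 := by
        rw [Finset.sum_add_sum_compl]; exact hP.2 l.1
      have h1E : ∑ j : {a : Fin N // a ∈ E}, P l.1 j.1 = ∑ j ∈ E, P l.1 j :=
        (Finset.sum_subtype (p := fun a : Fin N => a ∈ E) (F := inferInstance) E
          (fun x => Iff.rfl) _).symm
      have h1Ec : ∑ j : {a : Fin N // a ∉ E}, P l.1 j.1 = ∑ j ∈ Eᶜ, P l.1 j :=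
        (Finset.sum_subtype (p := fun a : Fin N => a ∉ E) (F := inferInstance) Eᶜ
          (fun x => Finset.mem_compl) _).symm
      have hD : (D *ᵥ fun _ => (1 : ℝ)) l = ∑ j : {a : Fin N // a ∈ E}, P l.1 j.1 := by
        simp [Matrix.mulVec, dotProduct, hDdef, Matrix.toBlock_apply]
      have hQ1 : ((1 - Q) *ᵥ fun _ => (1 : ℝ)) l
          = 1 - ∑ j : {a : Fin N // a ∉ E}, P l.1 j.1 := by
        simp only [Matrix.sub_mulVec, Matrix.one_mulVec, Pi.sub_apply]
        congr 1
        simp [Matrix.mulVec, dotProduct, hQdef, Matrix.toBlock_apply]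
      rw [hD, hQ1, h1E, h1Ec]
      linarith
    have hdetQ : IsUnit (1 - Q).det := (Matrix.isUnit_iff_isUnit_det _).mp hunit
    have hBD : B *ᵥ (D *ᵥ fun _ => (1 : ℝ)) = fun _ => (1 : ℝ) := by
      rw [hDone, Matrix.mulVec_mulVec, hBdef, Matrix.nonsing_inv_mul _ hdetQ,
        Matrix.one_mulVec]
    have hUBD : ∑ j, (U * B * D) i j = ∑ j, U i j := by
      have h1 : ∑ j, (U * B * D) i j = ((U * B * D) *ᵥ fun _ => (1 : ℝ)) i := by
        simp [Matrix.mulVec, dotProduct]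
      have h2 : (U * B * D) *ᵥ (fun _ => (1 : ℝ)) = U *ᵥ (B *ᵥ (D *ᵥ fun _ => (1 : ℝ))) := by
        rw [Matrix.mulVec_mulVec, Matrix.mulVec_mulVec]
      rw [h1, h2, hBD]
      simp [Matrix.mulVec, dotProduct]
    have hsplit : ∑ j ∈ E, P i.1 j + ∑ j ∈ Eᶜ, P i.1 j = 1 := by
      rw [Finset.sum_add_sum_compl]; exact hP.2 i.1
    have h1E : ∑ j : {a : Fin N // a ∈ E}, P i.1 j.1 = ∑ j ∈ E, P i.1 j :=
      (Finset.sum_subtype (p := fun a : Fin N => a ∈ E) (F := inferInstance) E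
        (fun x => Iff.rfl) _).symm
    have h1Ec : ∑ j : {a : Fin N // a ∉ E}, P i.1 j.1 = ∑ j ∈ Eᶜ, P i.1 j :=
      (Finset.sum_subtype (p := fun a : Fin N => a ∉ E) (F := inferInstance) Eᶜ
        (fun x => Finset.mem_compl) _).symm
    calc ∑ j, (T + U * B * D) i j = ∑ j, T i j + ∑ j, (U * B * D) i j := by
          simp [Matrix.add_apply, Finset.sum_add_distrib]
      _ = ∑ j : {a : Fin N // a ∈ E}, P i.1 j.1 + ∑ j : {a : Fin N // a ∉ E}, P i.1 j.1 := by
          rw [hUBD]; rfl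
      _ = 1 := by rw [h1E, h1Ec]; linarith
end

section
/- Let P be an N×N row-stochastic irreducible matrix with stationary probability vector π (π = πP, entries nonnegative, summing to 1), and let E ⊆ Fin N be nonempty with nonempty complement, with blocks T, U, D, Q of P with respect to E and Eᶜ, so that I − Q is invertible and P^E = T + U (I − Q)⁻¹ D. Then s := ∑_{k ∈ E} π_k > 0, and the vector π^E defined on E by π^E_j = π_j / s is a stationary probability vector of the censored matrix: π^E = π^E P^E and ∑_{j ∈ E} π^E_j = 1. -/
section Aux

open Matrix Finset

variable {N : ℕ}

lemma pow_entries_nonneg {P : Matrix (Fin N) (Fin N) ℝ}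
    (h : ∀ i j, 0 ≤ P i j) (k : ℕ) : ∀ i j, 0 ≤ (P ^ k) i j := by
  induction k with
  | zero => intro i j; simp [Matrix.one_apply]; split <;> norm_num
  | succ k ih =>
      intro i j
      rw [pow_succ, Matrix.mul_apply]
      exact Finset.sum_nonneg fun l _ => mul_nonneg (ih i l) (h l j)

lemma stat_pow {P : Matrix (Fin N) (Fin N) ℝ} {π : Fin N → ℝ}
    (hstat : ∀ j, π j = ∑ i, π i * P i j) (k : ℕ) :
    ∀ j, π j = ∑ i, π i * (P ^ k) i j := by
  induction k with
  | zero => intro j; simp [Matrix.one_apply]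
  | succ k ih =>
      intro j
      rw [pow_succ]
      have : ∑ i, π i * (P ^ k * P) i j
          = ∑ l, (∑ i, π i * (P ^ k) i l) * P l j := by
        simp only [Matrix.mul_apply, Finset.mul_sum, Finset.sum_mul]
        rw [Finset.sum_comm]
        apply Finset.sum_congr rfl; intro l _
        apply Finset.sum_congr rfl; intro i _
        ring
      rw [this]
      calc π j = ∑ l, π l * P l j := hstat j
        _ = ∑ l, (∑ i, π i * (P ^ k) i l) * P l j := by
              apply Finset.sum_congr rfl; intro l _; rw [← ih l]

lemma pi_pos {P : Matrix (Fin N) (Fin N) ℝ} (hP : RowStochastic P)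
    (hirr : MatIrreducible P) {π : Fin N → ℝ} (hnn : ∀ j, 0 ≤ π j)
    (hsum : ∑ j, π j = 1) (hstat : ∀ j, π j = ∑ i, π i * P i j) :
    ∀ j, 0 < π j := by
  have ⟨i0, hi0⟩ : ∃ i0, 0 < π i0 := by
    by_contra h
    push_neg at h
    have : ∀ i, π i = 0 := fun i => le_antisymm (h i) (hnn i)
    simp [this] at hsum
  intro j
  obtain ⟨k, hk⟩ := hirr i0 j
  have h1 : π i0 * (P ^ k) i0 j ≤ ∑ i, π i * (P ^ k) i j :=
    Finset.single_le_sum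
      (fun i _ => mul_nonneg (hnn i) (pow_entries_nonneg hP.1 k i j))
      (Finset.mem_univ i0)
  have := stat_pow hstat k j
  nlinarith

/-- The key invertibility fact. -/
lemma unit_one_sub_Q {P : Matrix (Fin N) (Fin N) ℝ} (hP : RowStochastic P)
    (hirr : MatIrreducible P) (E : Finset (Fin N)) (hE : E.Nonempty) :
    IsUnit (1 - P.toBlock (· ∉ E) (· ∉ E)) := by
  rw [Matrix.isUnit_iff_isUnit_det, isUnit_iff_ne_zero]
  intro hdet
  obtain ⟨v, hv0, hv⟩ := Matrix.exists_mulVec_eq_zero_iff.2 hdet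
  -- extend v by zero on E
  set w : Fin N → ℝ := fun i => if h : i ∉ E then v ⟨i, h⟩ else 0 with hw
  have hwE : ∀ i ∈ E, w i = 0 := by intro i hi; simp [hw, hi]
  -- w is harmonic off E : for i ∉ E, w i = ∑ j, P i j * w j
  have hharm : ∀ i, i ∉ E → w i = ∑ j, P i j * w j := by
    intro i hi
    have h0 := congrFun hv ⟨i, hi⟩
    rw [Matrix.sub_mulVec, Matrix.one_mulVec] at h0
    have h1 : v ⟨i, hi⟩ = ∑ j : {a // a ∉ E}, P i ↑j * v j := by
      have : (P.toBlock (· ∉ E) (· ∉ E) *ᵥ v) ⟨i, hi⟩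
          = ∑ j : {a // a ∉ E}, P i ↑j * v j := by
        simp [Matrix.mulVec, dotProduct, Matrix.toBlock_apply]
      have h2 : v ⟨i, hi⟩ - (P.toBlock (· ∉ E) (· ∉ E) *ᵥ v) ⟨i, hi⟩ = 0 := h0
      rw [this] at h2; linarith
    have h3 : ∑ j : {a // a ∉ E}, P i ↑j * v j = ∑ j ∈ Eᶜ, P i j * w j := by
      rw [Finset.sum_subtype (p := fun a => a ∉ E) Eᶜ (by simp) (fun j => P i j * w j)]
      apply Finset.sum_congr rfl
      intro j _
      simp [hw, j.2]
    have h4 : ∑ j, P i j * w j = ∑ j ∈ E, P i j * w j + ∑ j ∈ Eᶜ, P i j * w j :=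
      (Finset.sum_add_sum_compl E _).symm
    have h5 : ∑ j ∈ E, P i j * w j = 0 :=
      Finset.sum_eq_zero fun j hj => by rw [hwE j hj, mul_zero]
    have h6 : w i = v ⟨i, hi⟩ := by simp [hw, hi]
    rw [h6, h1, h3, h4, h5, zero_add]
  -- maximizer of |w|
  have hNE : Nonempty (Fin N) := ⟨hE.choose⟩
  obtain ⟨i0, -, hi0⟩ := Finset.exists_max_image Finset.univ (fun i => |w i|)
    Finset.univ_nonempty
  set m := |w i0| with hm
  have hmax : ∀ i, |w i| ≤ m := fun i => hi0 i (Finset.mem_univ i)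
  by_cases hm0 : m = 0
  · -- then w = 0 hence v = 0, contradiction
    apply hv0
    funext j
    have : |w ↑j| = 0 := le_antisymm (hm0 ▸ hmax ↑j) (abs_nonneg _)
    have hwj : w ↑j = 0 := abs_eq_zero.1 this
    have : w ↑j = v j := by simp [hw, j.2]
    rw [← this, hwj]; rfl
  have hmpos : 0 < m := lt_of_le_of_ne (abs_nonneg _) (Ne.symm hm0)
  -- one-step closure
  have step : ∀ i, |w i| = m → ∀ j, 0 < P i j → |w j| = m := by
    intro i hi j hPij
    have hiE : i ∉ E := by
      intro hmem
      rw [hwE i hmem] at hi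
      simp at hi
      exact hm0 hi.symm
    have heq := hharm i hiE
    have habs : m ≤ ∑ l, P i l * |w l| := by
      calc m = |w i| := hi.symm
        _ = |∑ l, P i l * w l| := by rw [heq]
        _ ≤ ∑ l, |P i l * w l| := Finset.abs_sum_le_sum_abs _ _
        _ = ∑ l, P i l * |w l| := by
              apply Finset.sum_congr rfl; intro l _
              rw [abs_mul, abs_of_nonneg (hP.1 i l)]
    have hsum0 : ∑ l, P i l * (m - |w l|) = 0 := by
      have h1 : ∑ l, P i l * (m - |w l|) = m - ∑ l, P i l * |w l| := by
        simp only [mul_sub, Finset.sum_sub_distrib, ← Finset.sum_mul, hP.2 i, one_mul]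
      have h2 : ∑ l, P i l * (m - |w l|) ≥ 0 :=
        Finset.sum_nonneg fun l _ => mul_nonneg (hP.1 i l) (by linarith [hmax l])
      linarith
    have := (Finset.sum_eq_zero_iff_of_nonneg
      (fun l _ => mul_nonneg (hP.1 i l) (by linarith [hmax l]))).1 hsum0 j
      (Finset.mem_univ j)
    rcases mul_eq_zero.1 this with h | h
    · exact absurd h (ne_of_gt hPij)
    · linarith [hmax j]
  -- k-step closure
  have stepk : ∀ k : ℕ, ∀ i, |w i| = m → ∀ j, 0 < (P ^ k) i j → |w j| = m := by
    intro k
    induction k with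
    | zero =>
        intro i hi j hij
        have : i = j := by
          by_contra hne
          simp [Matrix.one_apply, hne] at hij
        exact this ▸ hi
    | succ k ih =>
        intro i hi j hij
        rw [pow_succ, Matrix.mul_apply] at hij
        obtain ⟨l, -, hl⟩ := Finset.exists_ne_zero_of_sum_ne_zero (ne_of_gt hij)
        have h1 : 0 < (P ^ k) i l := by
          rcases lt_or_eq_of_le (pow_entries_nonneg hP.1 k i l) with h | h
          · exact h
          · exact absurd (by rw [← h, zero_mul]) hl
        have h2 : 0 < P l j := by
          rcases lt_or_eq_of_le (hP.1 l j) with h | h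
          · exact h
          · exact absurd (by rw [← h, mul_zero]) hl
        exact step l (ih i hi l h1) j h2
  -- contradiction using irreducibility: reach E from the maximizer
  obtain ⟨e, he⟩ := hE
  obtain ⟨k, hk⟩ := hirr i0 e
  have : |w e| = m := stepk k i0 rfl e hk
  rw [hwE e he] at this
  simp at this
  exact hm0 this.symm

end Aux

open Matrix Finset

/-- Stationary vector of the finite censored chain: if `π` is a stationary probability
vector of the irreducible row-stochastic matrix `P` and `E` is a nonempty censoring set
with nonempty complement, then `I - Q` is invertible, `s = ∑_{k ∈ E} π_k > 0`, and
`π^E = (π_j / s)_{j ∈ E}` is a stationary probability vector of the censored matrix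
`P^E = T + U (I - Q)⁻¹ D`. -/
theorem censored_stationary {N : ℕ}
    (P : Matrix (Fin N) (Fin N) ℝ) (hP : RowStochastic P) (hirr : MatIrreducible P)
    (π : Fin N → ℝ) (hnn : ∀ j, 0 ≤ π j) (hsum : ∑ j, π j = 1)
    (hstat : ∀ j, π j = ∑ i, π i * P i j)
    (E : Finset (Fin N)) (hE : E.Nonempty) (hEc : Eᶜ.Nonempty) :
    IsUnit (1 - P.toBlock (· ∉ E) (· ∉ E)) ∧
      0 < ∑ k ∈ E, π k ∧
      (∑ j : {a // a ∈ E}, π ↑j / ∑ k ∈ E, π k) = 1 ∧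
      ∀ j : {a // a ∈ E},
        π ↑j / (∑ k ∈ E, π k) =
          ∑ i : {a // a ∈ E},
            (π ↑i / ∑ k ∈ E, π k) *
              (P.toBlock (· ∈ E) (· ∈ E) +
                P.toBlock (· ∈ E) (· ∉ E) * (1 - P.toBlock (· ∉ E) (· ∉ E))⁻¹ *
                  P.toBlock (· ∉ E) (· ∈ E)) i j := by
  have hπpos := pi_pos hP hirr hnn hsum hstat
  have hU := unit_one_sub_Q hP hirr E hE
  have hUdet : IsUnit (1 - P.toBlock (· ∉ E) (· ∉ E)).det :=
    (Matrix.isUnit_iff_isUnit_det _).1 hU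
  have hs : 0 < ∑ k ∈ E, π k := Finset.sum_pos (fun k _ => hπpos k) hE
  refine ⟨hU, hs, ?_, ?_⟩
  · rw [← Finset.sum_div, Finset.sum_coe_sort E π, div_self (ne_of_gt hs)]
  -- stationarity
  set T := P.toBlock (· ∈ E) (· ∈ E) with hT
  set U := P.toBlock (· ∈ E) (· ∉ E) with hUU
  set D := P.toBlock (· ∉ E) (· ∈ E) with hD
  set Q := P.toBlock (· ∉ E) (· ∉ E) with hQ
  set R := (1 - Q)⁻¹ with hR
  set α : {a // a ∈ E} → ℝ := fun i => π ↑i with hα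
  set β : {a // a ∉ E} → ℝ := fun i => π ↑i with hβv
  have hsplit : ∀ f : Fin N → ℝ,
      ∑ i, f i = (∑ i : {a // a ∈ E}, f ↑i) + ∑ i : {a // a ∉ E}, f ↑i := by
    intro f
    rw [← Finset.sum_add_sum_compl E f, Finset.sum_coe_sort E f,
      Finset.sum_subtype (p := fun a => a ∉ E) Eᶜ (by simp) f]
  have hstatE : ∀ j : {a // a ∈ E}, π ↑j = (α ᵥ* T) j + (β ᵥ* D) j := by
    intro j
    rw [hstat ↑j, hsplit (fun i => π i * P i ↑j)]
    simp [Matrix.vecMul, dotProduct, Matrix.toBlock_apply, hα, hβv, hT, hD]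
  have hstatEc : ∀ j : {a // a ∉ E}, π ↑j = (α ᵥ* U) j + (β ᵥ* Q) j := by
    intro j
    rw [hstat ↑j, hsplit (fun i => π i * P i ↑j)]
    simp [Matrix.vecMul, dotProduct, Matrix.toBlock_apply, hα, hβv, hUU, hQ]
  have hβeq : β ᵥ* (1 - Q) = α ᵥ* U := by
    funext j
    have h1 : (β ᵥ* (1 - Q)) j = β j - (β ᵥ* Q) j := by
      rw [Matrix.vecMul_sub, Matrix.vecMul_one]
      rfl
    rw [h1]
    have := hstatEc j
    simp only [hβv] at *
    linarith
  have hβ2 : α ᵥ* (U * R) = β := by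
    calc α ᵥ* (U * R) = (α ᵥ* U) ᵥ* R := (Matrix.vecMul_vecMul α U R).symm
      _ = (β ᵥ* (1 - Q)) ᵥ* R := by rw [hβeq]
      _ = β ᵥ* ((1 - Q) * R) := Matrix.vecMul_vecMul β (1 - Q) R
      _ = β ᵥ* 1 := by rw [hR, Matrix.mul_nonsing_inv _ hUdet]
      _ = β := Matrix.vecMul_one β
  intro j
  have hMj : π ↑j = (α ᵥ* (T + U * R * D)) j := by
    have h1 : α ᵥ* (T + U * R * D) = α ᵥ* T + β ᵥ* D := by
      rw [Matrix.vecMul_add]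
      congr 1
      rw [← Matrix.vecMul_vecMul α (U * R) D, hβ2]
    rw [h1]
    exact hstatE j
  have hexp : (α ᵥ* (T + U * R * D)) j
      = ∑ i : {a // a ∈ E}, π ↑i * (T + U * R * D) i j := by
    simp [Matrix.vecMul, dotProduct, hα]
  calc π ↑j / (∑ k ∈ E, π k)
      = (∑ i : {a // a ∈ E}, π ↑i * (T + U * R * D) i j) / (∑ k ∈ E, π k) := by
        rw [hMj, hexp]
    _ = ∑ i : {a // a ∈ E}, (π ↑i / ∑ k ∈ E, π k) * (T + U * R * D) i j := by
        rw [Finset.sum_div]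
        apply Finset.sum_congr rfl
        intro i _
        rw [div_mul_eq_mul_div]
end

section
/- Let P : ℕ → ℕ → ℝ≥0∞ be row-stochastic and let E ⊆ ℕ be nonempty. If a state i ∈ E is recurrent (P^{{i}} i i = 1), then the i-th row of the censored matrix sums to 1: ∑'_{j ∈ E} P^E i j = 1. In particular, if every state of P is recurrent, then the censored matrix P^E is row-stochastic on E. -/
open scoped ENNReal

/-- The censored (taboo-path) transition probability: for a transition function `P` on `α`
and a censoring set `E`, `censored P E i j` is `P i j` plus the sum over all finite paths
through the complement of `E` from `i` to `j`. -/
noncomputable def censored {α : Type*} (P : α → α → ℝ≥0∞) (E : Set α) (i j : α) : ℝ≥0∞ :=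
  P i j + ∑' (n : ℕ), ∑' (w : Fin (n + 1) → ↥Eᶜ),
    P i ↑(w 0) * (∏ k : Fin n, P ↑(w k.castSucc) ↑(w k.succ)) * P ↑(w (Fin.last n)) j

/-- A countable-state transition function is row-stochastic if each row sums to 1. -/
def RowStoch (P : ℕ → ℕ → ℝ≥0∞) : Prop := ∀ i, ∑' j, P i j = 1

namespace CAux

variable (P : ℕ → ℕ → ℝ≥0∞)

/-- weight of a path -/
noncomputable def W (i : ℕ) (F : Set ℕ) (n : ℕ) (w : Fin (n+1) → ↥Fᶜ) : ℝ≥0∞ :=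
  P i ↑(w 0) * ∏ k : Fin n, P ↑(w k.castSucc) ↑(w k.succ)

/-- survival mass after n+1 steps in Fᶜ -/
noncomputable def S (i : ℕ) (F : Set ℕ) (n : ℕ) : ℝ≥0∞ :=
  ∑' w : Fin (n+1) → ↥Fᶜ, W P i F n w

/-- exit mass at step n -/
noncomputable def C (i : ℕ) (F : Set ℕ) (n : ℕ) : ℝ≥0∞ :=
  ∑' w : Fin (n+1) → ↥Fᶜ, W P i F n w * ∑' j : ↥F, P ↑(w (Fin.last n)) ↑j

lemma row_split (hP : RowStoch P) (x : ℕ) (F : Set ℕ) :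
    (∑' j : ↥F, P x ↑j) + (∑' j : ↥Fᶜ, P x ↑j) = 1 := by
  rw [Summable.tsum_add_tsum_compl (f := fun j => P x j) ENNReal.summable ENNReal.summable, hP x]

lemma S_zero (i : ℕ) (F : Set ℕ) : S P i F 0 = ∑' j : ↥Fᶜ, P i ↑j := by
  rw [S, ← (Equiv.funUnique (Fin 1) ↥Fᶜ).symm.tsum_eq]
  simp [W]

lemma S_succ (i : ℕ) (F : Set ℕ) (n : ℕ) :
    S P i F (n+1) = ∑' w : Fin (n+1) → ↥Fᶜ,
      W P i F n w * ∑' j : ↥Fᶜ, P ↑(w (Fin.last n)) ↑j := by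
  rw [S, ← (Fin.snocEquiv (fun _ : Fin (n+2) => ↥Fᶜ)).tsum_eq, ENNReal.tsum_prod']
  rw [ENNReal.tsum_comm]
  refine tsum_congr fun w => ?_
  rw [← ENNReal.tsum_mul_left]
  refine tsum_congr fun x => ?_
  show W P i F (n+1) (Fin.snoc w x) = W P i F n w * P ↑(w (Fin.last n)) ↑x
  rw [W, W, Fin.prod_univ_castSucc]
  have h0 : (Fin.snoc w x : Fin (n+2) → ↥Fᶜ) 0 = w 0 := by
    rw [show (0 : Fin (n+2)) = Fin.castSucc 0 by simp, Fin.snoc_castSucc]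
  have hc : ∀ k : Fin n, (Fin.snoc w x : Fin (n+2) → ↥Fᶜ) k.castSucc.castSucc = w k.castSucc :=
    fun k => Fin.snoc_castSucc ..
  have hs : ∀ k : Fin n, (Fin.snoc w x : Fin (n+2) → ↥Fᶜ) k.castSucc.succ = w k.succ := by
    intro k
    rw [Fin.succ_castSucc, Fin.snoc_castSucc]
  have hl : (Fin.snoc w x : Fin (n+2) → ↥Fᶜ) (Fin.last n).castSucc = w (Fin.last n) :=
    Fin.snoc_castSucc ..
  have hl2 : (Fin.snoc w x : Fin (n+2) → ↥Fᶜ) (Fin.last n).succ = x := by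
    rw [show (Fin.last n).succ = Fin.last (n+1) by simp [Fin.ext_iff], Fin.snoc_last]
  have hprod : (∏ k : Fin n,
      P ↑((Fin.snoc w x : Fin (n+2) → ↥Fᶜ) k.castSucc.castSucc)
        ↑((Fin.snoc w x : Fin (n+2) → ↥Fᶜ) k.castSucc.succ))
      = ∏ k : Fin n, P ↑(w k.castSucc) ↑(w k.succ) :=
    Finset.prod_congr rfl fun k _ => by rw [hc, hs]
  rw [hprod, h0, hl, hl2, mul_assoc]

end CAux

namespace CAux2
open CAux

variable (P : ℕ → ℕ → ℝ≥0∞)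

lemma S_rec (hP : RowStoch P) (i : ℕ) (F : Set ℕ) (n : ℕ) :
    S P i F n = C P i F n + S P i F (n+1) := by
  rw [S_succ, C, ← ENNReal.tsum_add]
  refine tsum_congr fun w => ?_
  rw [← mul_add, row_split P hP _ F, mul_one]

lemma ident (hP : RowStoch P) (i : ℕ) (F : Set ℕ) : ∀ N : ℕ,
    ((∑' j : ↥F, P i ↑j) + ∑ n ∈ Finset.range N, C P i F n) + S P i F N = 1 := by
  intro N
  induction N with
  | zero => simpa [S_zero] using row_split P hP i F
  | succ N ih =>
    rw [Finset.sum_range_succ, ← ih, S_rec P hP i F N]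
    ring

lemma S_le_one (hP : RowStoch P) (i : ℕ) (F : Set ℕ) (N : ℕ) : S P i F N ≤ 1 := by
  conv_rhs => rw [← ident P hP i F N]
  exact le_add_self

lemma target_eq (hP : RowStoch P) (i : ℕ) (F : Set ℕ) :
    ∑' j : ↥F, censored P F i ↑j = 1 - ⨅ n, S P i F n := by
  have h1 : ∑' j : ↥F, censored P F i ↑j
      = (∑' j : ↥F, P i ↑j) + ∑' n : ℕ, C P i F n := by
    calc ∑' j : ↥F, censored P F i ↑j
        = ∑' j : ↥F, (P i ↑j + ∑' (n : ℕ), ∑' (w : Fin (n+1) → ↥Fᶜ),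
            W P i F n w * P ↑(w (Fin.last n)) ↑j) := rfl
      _ = (∑' j : ↥F, P i ↑j) + ∑' j : ↥F, ∑' (n : ℕ), ∑' (w : Fin (n+1) → ↥Fᶜ),
            W P i F n w * P ↑(w (Fin.last n)) ↑j := ENNReal.tsum_add
      _ = (∑' j : ↥F, P i ↑j) + ∑' (n : ℕ), ∑' j : ↥F, ∑' (w : Fin (n+1) → ↥Fᶜ),
            W P i F n w * P ↑(w (Fin.last n)) ↑j := by rw [ENNReal.tsum_comm]
      _ = (∑' j : ↥F, P i ↑j) + ∑' (n : ℕ), ∑' (w : Fin (n+1) → ↥Fᶜ), ∑' j : ↥F,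
            W P i F n w * P ↑(w (Fin.last n)) ↑j := by
          congr 1; exact tsum_congr fun n => ENNReal.tsum_comm
      _ = (∑' j : ↥F, P i ↑j) + ∑' n : ℕ, C P i F n := by
          congr 1
          exact tsum_congr fun n => tsum_congr fun w => ENNReal.tsum_mul_left
  rw [h1, ENNReal.sub_iInf, ENNReal.tsum_eq_iSup_nat, ENNReal.add_iSup]
  refine iSup_congr fun N => ?_
  exact ENNReal.eq_sub_of_add_eq (ne_top_of_le_ne_top ENNReal.one_ne_top (S_le_one P hP i F N))
    (ident P hP i F N)

end CAux2

namespace CAux3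
open CAux CAux2

variable (P : ℕ → ℕ → ℝ≥0∞)

lemma tsum_singleton' (i : ℕ) (f : ℕ → ℝ≥0∞) :
    ∑' j : ↥({i} : Set ℕ), f ↑j = f i :=
  tsum_eq_single (⟨i, rfl⟩ : ↥({i} : Set ℕ))
    (fun b hb => (hb (Subtype.ext b.2)).elim)

lemma iInf_S_singleton (hP : RowStoch P) (i : ℕ) (hrec : censored P {i} i i = 1) :
    ⨅ n, S P i {i} n = 0 := by
  have h := target_eq P hP i {i}
  rw [tsum_singleton' i (censored P {i} i), hrec] at h
  have hle : ⨅ n, S P i {i} n ≤ 1 := (iInf_le _ 0).trans (S_le_one P hP i {i} 0)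
  calc ⨅ n, S P i {i} n = 1 - (1 - ⨅ n, S P i {i} n) :=
        (ENNReal.sub_sub_cancel ENNReal.one_ne_top hle).symm
    _ = 1 - 1 := by rw [← h]
    _ = 0 := by simp

lemma S_mono (i : ℕ) (E : Set ℕ) (hi : i ∈ E) (n : ℕ) :
    S P i E n ≤ S P i {i} n := by
  have hsub : Eᶜ ⊆ ({i} : Set ℕ)ᶜ := Set.compl_subset_compl.2 (Set.singleton_subset_iff.2 hi)
  set ι : ↥Eᶜ → ↥(({i} : Set ℕ)ᶜ) := fun x => ⟨↑x, hsub x.2⟩ with hι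
  have hinj : Function.Injective ι := by
    intro a b h
    have h2 : ((ι a : ↥(({i} : Set ℕ)ᶜ)) : ℕ) = ((ι b : ↥(({i} : Set ℕ)ᶜ)) : ℕ) :=
      Subtype.ext_iff.mp h
    exact Subtype.ext h2
  have hΦ : Function.Injective (fun w : Fin (n+1) → ↥Eᶜ => ι ∘ w) := hinj.comp_left
  calc S P i E n = ∑' w : Fin (n+1) → ↥Eᶜ, W P i {i} n (ι ∘ w) := tsum_congr fun w => rfl
    _ ≤ S P i {i} n := ENNReal.tsum_comp_le_tsum_of_injective hΦ _

end CAux3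


/-- If a state `i ∈ E` is recurrent (`P^{{i}} i i = 1`), then the `i`-th row of the
censored matrix `P^E` sums to 1; in particular, if every state is recurrent then `P^E`
is row-stochastic on `E`. -/
theorem censored_row_sum_of_recurrent (P : ℕ → ℕ → ℝ≥0∞) (hP : RowStoch P)
    (E : Set ℕ) (hE : E.Nonempty) :
    (∀ i ∈ E, censored P {i} i i = 1 → ∑' j : ↥E, censored P E i ↑j = 1) ∧
      ((∀ i, censored P {i} i i = 1) →
        ∀ i ∈ E, ∑' j : ↥E, censored P E i ↑j = 1) := by
  have hfirst : ∀ i ∈ E, censored P {i} i i = 1 → ∑' j : ↥E, censored P E i ↑j = 1 := by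
    intro i hi hrec
    rw [CAux2.target_eq P hP i E]
    have h0 : ⨅ n, CAux.S P i E n = 0 := by
      refine le_antisymm ?_ zero_le
      rw [← CAux3.iInf_S_singleton P hP i hrec]
      exact iInf_mono (CAux3.S_mono P i E hi)
    rw [h0]
    simp
  exact ⟨hfirst, fun hall i hi => hfirst i hi (hall i)⟩
end

section
/- Let P : ℕ → ℕ → ℝ≥0∞ be row-stochastic and irreducible, and let E ⊆ ℕ be nonempty. Then the censored matrix P^E is irreducible on E: for all i, j ∈ E with i ≠ j, there exist m ≥ 1 and states i = x_0, x_1, …, x_m = j, all in E, with P^E x_t x_{t+1} > 0 for all t < m. -/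
open scoped ENNReal

/-- A countable-state transition function `P` is irreducible if any two distinct states
are connected by a finite path of positive-probability transitions. -/
def Irred (P : ℕ → ℕ → ℝ≥0∞) : Prop :=
  ∀ i j : ℕ, i ≠ j → ∃ m : ℕ, 1 ≤ m ∧ ∃ x : ℕ → ℕ,
    x 0 = i ∧ x m = j ∧ ∀ t < m, 0 < P (x t) (x (t + 1))

lemma censored_pos_of_excursion (P : ℕ → ℕ → ℝ≥0∞) (E : Set ℕ) (m : ℕ) (hm : 1 ≤ m)
    (x : ℕ → ℕ) (hpos : ∀ t < m, 0 < P (x t) (x (t + 1)))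
    (hmid : ∀ t, 0 < t → t < m → x t ∈ Eᶜ) :
    0 < censored P E (x 0) (x m) := by
  match m, hm with
  | 1, _ =>
    have h1 : 0 < P (x 0) (x 1) := hpos 0 one_pos
    exact h1.trans_le (le_add_right le_rfl)
  | (n + 2), _ =>
    set w : Fin (n + 1) → ↥Eᶜ := fun k => ⟨x (k + 1), hmid _ (Nat.succ_pos _)
      (by have := k.isLt; omega)⟩ with hw
    set T : ℝ≥0∞ := P (x 0) ↑(w 0) * (∏ k : Fin n, P ↑(w k.castSucc) ↑(w k.succ))
      * P ↑(w (Fin.last n)) (x (n + 2)) with hT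
    have hTpos : 0 < T := by
      apply ENNReal.mul_pos
      · apply mul_ne_zero
        · exact (hpos 0 (by omega)).ne'
        · rw [← pos_iff_ne_zero]
          apply CanonicallyOrderedAdd.prod_pos.2
          intro k _
          have : (↑(w k.castSucc) : ℕ) = x (k + 1) := rfl
          have h2 : (↑(w k.succ) : ℕ) = x (k + 2) := by
            simp only [hw, Fin.val_succ]
          rw [this, h2]
          exact hpos (k + 1) (by have := k.isLt; omega)
      · have : (↑(w (Fin.last n)) : ℕ) = x (n + 1) := rfl
        rw [this]
        exact (hpos (n + 1) (by omega)).ne'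
    refine hTpos.trans_le ?_
    have h1 : T ≤ ∑' (w' : Fin (n + 1) → ↥Eᶜ),
        P (x 0) ↑(w' 0) * (∏ k : Fin n, P ↑(w' k.castSucc) ↑(w' k.succ))
        * P ↑(w' (Fin.last n)) (x (n + 2)) := ENNReal.le_tsum w
    have h2 : (∑' (w' : Fin (n + 1) → ↥Eᶜ),
        P (x 0) ↑(w' 0) * (∏ k : Fin n, P ↑(w' k.castSucc) ↑(w' k.succ))
        * P ↑(w' (Fin.last n)) (x (n + 2))) ≤ ∑' (n' : ℕ), ∑' (w' : Fin (n' + 1) → ↥Eᶜ),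
        P (x 0) ↑(w' 0) * (∏ k : Fin n', P ↑(w' k.castSucc) ↑(w' k.succ))
        * P ↑(w' (Fin.last n')) (x (n + 2)) := ENNReal.le_tsum n
    exact (h1.trans h2).trans (le_add_left le_rfl)

lemma build (P : ℕ → ℕ → ℝ≥0∞) (E : Set ℕ) :
    ∀ m : ℕ, 1 ≤ m → ∀ x : ℕ → ℕ, x 0 ∈ E → x m ∈ E →
      (∀ t < m, 0 < P (x t) (x (t + 1))) →
      ∃ m' : ℕ, 1 ≤ m' ∧ ∃ y : ℕ → ℕ, y 0 = x 0 ∧ y m' = x m ∧ (∀ t ≤ m', y t ∈ E) ∧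
        ∀ t < m', 0 < censored P E (y t) (y (t + 1)) := by
  intro m
  induction m using Nat.strong_induction_on with
  | _ m IH =>
  intro hm x hx0 hxm hpos
  have hex : ∃ t, 1 ≤ t ∧ t ≤ m ∧ x t ∈ E := ⟨m, hm, le_rfl, hxm⟩
  classical
  set t := Nat.find hex with ht
  obtain ⟨ht1, htm, hxt⟩ := Nat.find_spec hex
  have hmin : ∀ s, 1 ≤ s → s < t → x s ∉ E := fun s h1 h2 hmem =>
    Nat.find_min hex h2 ⟨h1, h2.le.trans htm, hmem⟩
  have hcens : 0 < censored P E (x 0) (x t) :=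
    censored_pos_of_excursion P E t ht1 x
      (fun s hs => hpos s (lt_of_lt_of_le hs htm))
      (fun s hs1 hs2 => hmin s hs1 hs2)
  rcases eq_or_lt_of_le htm with heq | hlt
  · refine ⟨1, le_rfl, fun k => if k = 0 then x 0 else x m, by simp, by simp, ?_, ?_⟩
    · intro s hs
      interval_cases s <;> simp [hx0, hxm]
    · intro s hs
      interval_cases s
      rw [ht, heq] at hcens
      simpa using hcens
  · have h1 : 1 ≤ m - t := by omega
    obtain ⟨m', hm', y, hy0, hym, hyE, hycens⟩ := IH (m - t) (by omega) h1
      (fun k => x (k + t)) (by simpa using hxt) (by rw [show m - t + t = m from Nat.sub_add_cancel htm]; exact hxm)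
      (fun s hs => by
        have := hpos (s + t) (by omega)
        simpa [add_right_comm] using this)
    refine ⟨m' + 1, by omega, fun k => if k = 0 then x 0 else y (k - 1), by simp, ?_, ?_, ?_⟩
    · simp only [Nat.add_sub_cancel, if_neg (Nat.succ_ne_zero m')]
      rw [hym]; rw [show m - t + t = m from Nat.sub_add_cancel htm]
    · intro s hs
      rcases Nat.eq_zero_or_pos s with rfl | hs0
      · simpa using hx0
      · show (if s = 0 then x 0 else y (s - 1)) ∈ E
        rw [if_neg (by omega)]
        exact hyE (s - 1) (by omega)
    · intro s hs
      rcases Nat.eq_zero_or_pos s with rfl | hs0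
      · simp only [if_pos rfl, if_neg (Nat.one_ne_zero)]
        have : y 0 = x t := by rw [hy0, Nat.zero_add]
        simpa [this] using hcens
      · show 0 < censored P E (if s = 0 then x 0 else y (s - 1))
          (if s + 1 = 0 then x 0 else y (s + 1 - 1))
        rw [if_neg (by omega), if_neg (by omega)]
        have : s + 1 - 1 = (s - 1) + 1 := by omega
        rw [this]
        exact hycens (s - 1) (by omega)

/-- If `P` is row-stochastic and irreducible, then the censored matrix `P^E` is
irreducible on `E`: distinct states of `E` are connected by paths staying in `E` whose
steps have positive censored transition probability. -/
theorem censored_irreducible (P : ℕ → ℕ → ℝ≥0∞) (hP : RowStoch P) (hirr : Irred P)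
    (E : Set ℕ) (hE : E.Nonempty) :
    ∀ i ∈ E, ∀ j ∈ E, i ≠ j → ∃ m : ℕ, 1 ≤ m ∧ ∃ x : ℕ → ℕ,
      x 0 = i ∧ x m = j ∧ (∀ t ≤ m, x t ∈ E) ∧
      ∀ t < m, 0 < censored P E (x t) (x (t + 1)) := by
  intro i hi j hj hne
  obtain ⟨m, hm, x, hx0, hxm, hpos⟩ := hirr i j hne
  obtain ⟨m', hm', y, hy0, hym, hyE, hyc⟩ :=
    build P E m hm x (hx0 ▸ hi) (hxm ▸ hj) hpos
  exact ⟨m', hm', y, hy0.trans hx0, hym.trans hxm, hyE, hyc⟩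
end

section
/- Let P : ℕ → ℕ → ℝ≥0∞ be row-stochastic and irreducible, and suppose P has a stationary probability vector π : ℕ → ℝ≥0∞, i.e. ∑'_k π k = 1 and π j = ∑'_i π i * P i j for all j. Let E ⊆ ℕ be nonempty. Then s := ∑'_{k ∈ E} π k satisfies 0 < s, and the vector π^E defined on E by π^E_j = π_j / s is a stationary probability vector of the censored matrix: ∑'_{j ∈ E} π^E_j = 1 and π^E_j = ∑'_{i ∈ E} π^E_i * P^E i j for all j ∈ E. -/
open scoped ENNReal

namespace CenAux



lemma tsum_sub' {ι : Type*} (f g : ι → ℝ≥0∞) (hg : ∑' i, g i ≠ ∞) (h : ∀ i, g i ≤ f i) :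
    ∑' i, (f i - g i) = ∑' i, f i - ∑' i, g i := by
  refine ENNReal.eq_sub_of_add_eq hg ?_
  rw [← ENNReal.tsum_add]
  exact tsum_congr fun i => tsub_add_cancel_of_le (h i)

lemma tsum_iSup_mono {ι : Type*} (f : ℕ → ι → ℝ≥0∞) (hf : ∀ u, Monotone fun N => f N u) :
    ∑' u, ⨆ N, f N u = ⨆ N, ∑' u, f N u := by
  calc ∑' u, ⨆ N, f N u = ⨆ s : Finset ι, ∑ u ∈ s, ⨆ N, f N u := ENNReal.tsum_eq_iSup_sum
  _ = ⨆ s : Finset ι, ⨆ N, ∑ u ∈ s, f N u :=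
      iSup_congr fun s => ENNReal.finsetSum_iSup_of_monotone fun u => hf u
  _ = ⨆ N, ⨆ s : Finset ι, ∑ u ∈ s, f N u := iSup_comm
  _ = ⨆ N, ∑' u, f N u := by simp_rw [ENNReal.tsum_eq_iSup_sum]

lemma tsum_iInf_anti {ι : Type*} (f : ℕ → ι → ℝ≥0∞) (hf : ∀ u, Antitone fun N => f N u)
    (h0 : ∑' u, f 0 u ≠ ∞) :
    ∑' u, ⨅ N, f N u = ⨅ N, ∑' u, f N u := by
  have hfin : ∀ u, f 0 u ≠ ∞ := fun u => ne_top_of_le_ne_top h0 (ENNReal.le_tsum u)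
  have hle : ∀ N u, f N u ≤ f 0 u := fun N u => hf u (Nat.zero_le N)
  have h1 : ∀ N, ∑' u, (f 0 u - f N u) = ∑' u, f 0 u - ∑' u, f N u := fun N =>
    tsum_sub' _ _ (ne_top_of_le_ne_top h0 (ENNReal.tsum_le_tsum fun u => hle N u)) (hle N)
  have h2 : ∑' u, ⨆ N, (f 0 u - f N u) = ⨆ N, ∑' u, (f 0 u - f N u) :=
    tsum_iSup_mono _ fun u M N hMN => tsub_le_tsub_left (hf u hMN) _
  have h3 : ∀ u, (⨆ N, (f 0 u - f N u)) = f 0 u - ⨅ N, f N u := fun u =>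
    (ENNReal.sub_iInf).symm
  simp_rw [h3, h1, ENNReal.sub_iInf.symm] at h2
  -- h2 : ∑' u, (f 0 u - ⨅ N, f N u) = ∑' f 0 - ⨅ N, ∑' f N
  have h4 : ∑' u, (f 0 u - ⨅ N, f N u) = ∑' u, f 0 u - ∑' u, ⨅ N, f N u :=
    tsum_sub' (fun u => f 0 u) (fun u => ⨅ N, f N u)
      (ne_top_of_le_ne_top h0 (ENNReal.tsum_le_tsum fun u => iInf_le_of_le 0 le_rfl))
      (fun u => iInf_le_of_le 0 le_rfl)
  rw [h4] at h2
  exact ((ENNReal.sub_right_inj h0 (ENNReal.tsum_le_tsum fun u => iInf_le_of_le 0 le_rfl)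
      (iInf_le_of_le 0 le_rfl)).mp h2)


variable (P : ℕ → ℕ → ℝ≥0∞) (π : ℕ → ℝ≥0∞) (E : Set ℕ)

noncomputable def A : ℕ → ↥Eᶜ → ℝ≥0∞
  | 0 => fun v => ∑' i : ↥E, π ↑i * P ↑i ↑v
  | n + 1 => fun v => ∑' u : ↥Eᶜ, A n u * P ↑u ↑v

noncomputable def R : ℕ → ↥Eᶜ → ℝ≥0∞
  | 0 => fun v => ∑' u : ↥Eᶜ, π ↑u * P ↑u ↑v
  | n + 1 => fun v => ∑' u : ↥Eᶜ, R n u * P ↑u ↑v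

noncomputable def r (v : ↥Eᶜ) : ℝ≥0∞ := ⨅ N, R P π E N v

lemma tsum_split (g : ℕ → ℝ≥0∞) :
    ∑' k, g k = (∑' i : ↥E, g ↑i) + ∑' i : ↥Eᶜ, g ↑i :=
  (Summable.tsum_add_tsum_compl ENNReal.summable ENNReal.summable).symm

variable {P π E}

lemma pi_split (hstat : ∀ j, π j = ∑' i, π i * P i j) (v : ↥Eᶜ) :
    π ↑v = A P π E 0 v + R P π E 0 v := by
  rw [hstat ↑v]; exact tsum_split E fun i => π i * P i ↑v

lemma R_decomp (hstat : ∀ j, π j = ∑' i, π i * P i j) (N : ℕ) (v : ↥Eᶜ) :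
    R P π E N v = A P π E (N + 1) v + R P π E (N + 1) v := by
  induction N generalizing v with
  | zero =>
    show (∑' u : ↥Eᶜ, π ↑u * P ↑u ↑v)
        = (∑' u : ↥Eᶜ, A P π E 0 u * P ↑u ↑v) + ∑' u : ↥Eᶜ, R P π E 0 u * P ↑u ↑v
    rw [tsum_congr fun u : ↥Eᶜ =>
      show π ↑u * P ↑u ↑v = A P π E 0 u * P ↑u ↑v + R P π E 0 u * P ↑u ↑v by
        rw [pi_split hstat u, add_mul], ENNReal.tsum_add]
  | succ N ih =>
    show (∑' u : ↥Eᶜ, R P π E N u * P ↑u ↑v)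
        = (∑' u : ↥Eᶜ, A P π E (N + 1) u * P ↑u ↑v) + ∑' u : ↥Eᶜ, R P π E (N + 1) u * P ↑u ↑v
    rw [tsum_congr fun u : ↥Eᶜ =>
      show R P π E N u * P ↑u ↑v
          = A P π E (N + 1) u * P ↑u ↑v + R P π E (N + 1) u * P ↑u ↑v by
        rw [ih u, add_mul], ENNReal.tsum_add]

lemma pi_partial (hstat : ∀ j, π j = ∑' i, π i * P i j) (N : ℕ) (v : ↥Eᶜ) :
    π ↑v = (∑ n ∈ Finset.range (N + 1), A P π E n v) + R P π E N v := by
  induction N with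
  | zero => simpa using pi_split hstat v
  | succ N ih =>
    rw [ih, R_decomp hstat N v, Finset.sum_range_succ _ (N + 1), Finset.sum_range_succ _ N]
    ring

lemma R_anti (hstat : ∀ j, π j = ∑' i, π i * P i j) (v : ↥Eᶜ) :
    Antitone fun N => R P π E N v :=
  antitone_nat_of_succ_le fun N => by rw [R_decomp hstat N v]; exact le_add_self

lemma R_le_pi (hstat : ∀ j, π j = ∑' i, π i * P i j) (N : ℕ) (v : ↥Eᶜ) :
    R P π E N v ≤ π ↑v := by
  rw [pi_partial hstat N v]; exact le_add_self

lemma pi_eq_tsum_add (hstat : ∀ j, π j = ∑' i, π i * P i j) (v : ↥Eᶜ) :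
    π ↑v = (∑' n, A P π E n v) + r P π E v := by
  have htsum : (∑' n, A P π E n v) = ⨆ N, ∑ n ∈ Finset.range (N + 1), A P π E n v :=
    ENNReal.tsum_eq_iSup_sum' (fun N => Finset.range (N + 1)) fun t => by
      obtain ⟨n, hn⟩ := Finset.exists_nat_subset_range t
      exact ⟨n, hn.trans (Finset.range_subset_range.2 (Nat.le_succ n))⟩
  refine le_antisymm ?_ ?_
  · rw [r, ENNReal.add_iInf]
    refine le_iInf fun N => ?_
    rw [pi_partial hstat N v]
    exact add_le_add_left (ENNReal.sum_le_tsum _) _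
  · rw [htsum, ENNReal.iSup_add]
    refine iSup_le fun N => ?_
    rw [pi_partial hstat N v]
    exact add_le_add_right (iInf_le _ N) _


lemma r_fixed (hP : ∀ i, ∑' j, P i j = 1) (hstat : ∀ j, π j = ∑' i, π i * P i j)
    (hfin : ∀ k, π k ≠ ∞) (v : ↥Eᶜ) :
    r P π E v = ∑' u : ↥Eᶜ, r P π E u * P ↑u ↑v := by
  have hPfin : ∀ u : ↥Eᶜ, P ↑u ↑v ≠ ∞ :=
    fun u => ne_top_of_le_ne_top (by rw [hP ↑u]; exact ENNReal.one_ne_top) (ENNReal.le_tsum (↑v : ℕ))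
  refine le_antisymm ?_ ?_
  · have h1 : r P π E v ≤ ⨅ N, R P π E (N + 1) v := le_iInf fun N => iInf_le _ (N + 1)
    have h2 : (⨅ N, R P π E (N + 1) v) = ⨅ N, ∑' u : ↥Eᶜ, R P π E N u * P ↑u ↑v := rfl
    have h3 : (⨅ N, ∑' u : ↥Eᶜ, R P π E N u * P ↑u ↑v)
        = ∑' u : ↥Eᶜ, ⨅ N, R P π E N u * P ↑u ↑v := by
      refine (tsum_iInf_anti (fun N (u : ↥Eᶜ) => R P π E N u * P ↑u ↑v) (fun u => fun M N hMN => mul_le_mul_left (R_anti hstat u hMN) _) ?_).symm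
      show (∑' u : ↥Eᶜ, R P π E 0 u * P ↑u ↑v) ≠ ∞
      exact ne_top_of_le_ne_top (hfin ↑v) ((R_le_pi hstat 1 v).trans le_rfl)
    have h4 : ∀ u : ↥Eᶜ, (⨅ N, R P π E N u * P ↑u ↑v) = r P π E u * P ↑u ↑v := fun u =>
      (ENNReal.iInf_mul fun h => absurd h (hPfin u)).symm
    calc r P π E v ≤ ⨅ N, R P π E (N + 1) v := h1
      _ = ∑' u : ↥Eᶜ, ⨅ N, R P π E N u * P ↑u ↑v := by rw [h2, h3]
      _ = ∑' u : ↥Eᶜ, r P π E u * P ↑u ↑v := tsum_congr h4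
  · refine le_iInf fun N => ?_
    calc (∑' u : ↥Eᶜ, r P π E u * P ↑u ↑v)
        ≤ ∑' u : ↥Eᶜ, R P π E N u * P ↑u ↑v :=
          ENNReal.tsum_le_tsum fun u => mul_le_mul_left (iInf_le _ N) _
      _ = R P π E (N + 1) v := rfl
      _ ≤ R P π E N v := R_anti hstat v (Nat.le_succ N)

lemma r_eq_zero (hP : ∀ i, ∑' j, P i j = 1)
    (hirr : ∀ i j : ℕ, i ≠ j → ∃ m : ℕ, 1 ≤ m ∧ ∃ x : ℕ → ℕ,
      x 0 = i ∧ x m = j ∧ ∀ t < m, 0 < P (x t) (x (t + 1)))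
    (hsum : ∑' k, π k = 1) (hstat : ∀ j, π j = ∑' i, π i * P i j)
    (hE : E.Nonempty) (v : ↥Eᶜ) : r P π E v = 0 := by
  by_contra hv0
  have hfin : ∀ k, π k ≠ ∞ :=
    fun k => ne_top_of_le_ne_top (hsum ▸ ENNReal.one_ne_top) (ENNReal.le_tsum k)
  have hrle : ∀ u : ↥Eᶜ, r P π E u ≤ π ↑u := fun u =>
    (iInf_le _ 0).trans (R_le_pi hstat 0 u)
  have hrfin : ∀ u : ↥Eᶜ, r P π E u ≠ ∞ := fun u => ne_top_of_le_ne_top (hfin ↑u) (hrle u)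
  have hpic : (∑' u : ↥Eᶜ, π ↑u) ≤ 1 := by
    rw [← hsum, tsum_split E π]; exact le_add_self
  have htotfin : (∑' u : ↥Eᶜ, r P π E u) ≠ ∞ :=
    ne_top_of_le_ne_top (ne_top_of_le_ne_top ENNReal.one_ne_top hpic)
      (ENNReal.tsum_le_tsum hrle)
  set q : ↥Eᶜ → ℝ≥0∞ := fun u => ∑' w : ↥Eᶜ, P ↑u ↑w with hqdef
  have hq1 : ∀ u : ↥Eᶜ, q u ≤ 1 := fun u => by
    rw [← hP ↑u, tsum_split E (P ↑u)]; exact le_add_self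
  have hsum_eq : (∑' u : ↥Eᶜ, r P π E u * q u) = ∑' u : ↥Eᶜ, r P π E u := by
    rw [show (∑' u : ↥Eᶜ, r P π E u) = ∑' w : ↥Eᶜ, ∑' u : ↥Eᶜ, r P π E u * P ↑u ↑w from
      tsum_congr fun w => r_fixed hP hstat hfin w, ENNReal.tsum_comm]
    exact tsum_congr fun u => ENNReal.tsum_mul_left.symm
  have hpt : ∀ u : ↥Eᶜ, r P π E u * q u = r P π E u := by
    intro u
    by_contra hne
    have hle : ∀ w : ↥Eᶜ, r P π E w * q w ≤ r P π E w := fun w => by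
      calc r P π E w * q w ≤ r P π E w * 1 := mul_le_mul_right (hq1 w) _
        _ = r P π E w := mul_one _
    have hlt : r P π E u * q u < r P π E u := lt_of_le_of_ne (hle u) hne
    have := ENNReal.tsum_lt_tsum (hsum_eq ▸ htotfin) hle hlt
    rw [hsum_eq] at this
    exact lt_irrefl _ this
  have hPzero : ∀ u : ↥Eᶜ, r P π E u ≠ 0 → ∀ e ∈ E, P ↑u e = 0 := by
    intro u hu e he
    have hq : q u = 1 := by
      refine (ENNReal.mul_right_inj hu (hrfin u)).mp ?_
      rw [mul_one]; exact hpt u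
    have hsplit := tsum_split E (P ↑u)
    rw [hP ↑u] at hsplit
    have h1 : (∑' i : ↥E, P ↑u ↑i) + 1 = 0 + 1 := by
      rw [zero_add]
      nth_rewrite 1 [← hq]
      exact hsplit.symm
    have h0 : (∑' i : ↥E, P ↑u ↑i) = 0 := (ENNReal.add_left_inj ENNReal.one_ne_top).mp h1
    exact ENNReal.tsum_eq_zero.mp h0 ⟨e, he⟩
  -- propagation of positivity of r along positive transitions
  have hprop : ∀ u : ↥Eᶜ, r P π E u ≠ 0 → ∀ b : ℕ, 0 < P ↑u b →
      ∃ hb : b ∈ Eᶜ, r P π E ⟨b, hb⟩ ≠ 0 := by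
    intro u hu b hb
    have hbE : b ∈ Eᶜ := by
      intro hbmem
      rw [hPzero u hu b hbmem] at hb
      exact lt_irrefl _ hb
    refine ⟨hbE, ?_⟩
    have h1 : r P π E u * P ↑u b ≤ r P π E ⟨b, hbE⟩ := by
      rw [r_fixed hP hstat hfin ⟨b, hbE⟩]
      exact ENNReal.le_tsum u
    exact fun h0 => by
      rw [h0] at h1
      exact absurd (le_antisymm h1 (zero_le)) (ENNReal.mul_pos hu hb.ne').ne'
  -- irreducibility contradiction
  obtain ⟨e0, he0⟩ := hE
  have hne : (↑v : ℕ) ≠ e0 := fun h => v.2 (h ▸ he0)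
  obtain ⟨m, hm, x, hx0, hxm, hxpos⟩ := hirr ↑v e0 hne
  have hind : ∀ t, t ≤ m → ∃ h : x t ∈ Eᶜ, r P π E ⟨x t, h⟩ ≠ 0 := by
    intro t
    induction t with
    | zero =>
      intro _
      refine ⟨hx0 ▸ v.2, ?_⟩
      have hxv : (⟨x 0, hx0 ▸ v.2⟩ : ↥Eᶜ) = v := Subtype.ext hx0
      rw [hxv]; exact hv0
    | succ t ih =>
      intro ht
      obtain ⟨hmem, hrpos⟩ := ih (Nat.le_of_succ_le ht)
      exact hprop ⟨x t, hmem⟩ hrpos (x (t + 1)) (hxpos t (Nat.lt_of_succ_le ht))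
  obtain ⟨hmem, -⟩ := hind m le_rfl
  rw [hxm] at hmem
  exact hmem he0

lemma key (n : ℕ) (f : ↥Eᶜ → ℝ≥0∞) :
    (∑' i : ↥E, π ↑i * ∑' w : Fin (n + 1) → ↥Eᶜ,
      P ↑i ↑(w 0) * (∏ k : Fin n, P ↑(w k.castSucc) ↑(w k.succ)) * f (w (Fin.last n)))
    = ∑' v : ↥Eᶜ, A P π E n v * f v := by
  induction n generalizing f with
  | zero =>
    have h1 : ∀ i : ℕ, (∑' w : Fin 1 → ↥Eᶜ,
        P i ↑(w 0) * (∏ k : Fin 0, P ↑(w k.castSucc) ↑(w k.succ)) * f (w (Fin.last 0)))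
        = ∑' v : ↥Eᶜ, P i ↑v * f v := by
      intro i
      rw [← (Equiv.funUnique (Fin 1) ↥Eᶜ).symm.tsum_eq]
      exact tsum_congr fun v => by simp
    calc (∑' i : ↥E, π ↑i * ∑' w : Fin 1 → ↥Eᶜ,
          P ↑i ↑(w 0) * (∏ k : Fin 0, P ↑(w k.castSucc) ↑(w k.succ)) * f (w (Fin.last 0)))
        = ∑' i : ↥E, ∑' v : ↥Eᶜ, π ↑i * (P ↑i ↑v * f v) := by
          refine tsum_congr fun i => ?_
          rw [h1 ↑i, ENNReal.tsum_mul_left]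
      _ = ∑' v : ↥Eᶜ, ∑' i : ↥E, π ↑i * (P ↑i ↑v * f v) := ENNReal.tsum_comm
      _ = ∑' v : ↥Eᶜ, A P π E 0 v * f v := by
          refine tsum_congr fun v => ?_
          rw [show A P π E 0 v = ∑' i : ↥E, π ↑i * P ↑i ↑v from rfl,
            ← ENNReal.tsum_mul_right]
          exact tsum_congr fun i => by ring
  | succ n ih =>
    have hsnoc : ∀ (i : ℕ) (v : ↥Eᶜ) (w : Fin (n + 1) → ↥Eᶜ),
        P i ↑((Fin.snoc w v : Fin (n + 2) → ↥Eᶜ) 0) *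
          (∏ k : Fin (n + 1), P ↑((Fin.snoc w v : Fin (n + 2) → ↥Eᶜ) k.castSucc)
              ↑((Fin.snoc w v : Fin (n + 2) → ↥Eᶜ) k.succ)) *
          f ((Fin.snoc w v : Fin (n + 2) → ↥Eᶜ) (Fin.last (n + 1)))
        = P i ↑(w 0) * (∏ k : Fin n, P ↑(w k.castSucc) ↑(w k.succ)) *
            (P ↑(w (Fin.last n)) ↑v * f v) := by
      intro i v w
      rw [show ((0 : Fin (n + 2))) = Fin.castSucc 0 from (Fin.castSucc_zero).symm,
        Fin.snoc_castSucc, Fin.prod_univ_castSucc, Fin.snoc_last]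
      simp only [Fin.succ_castSucc, Fin.snoc_castSucc, Fin.succ_last, Fin.snoc_last]
      ring
    calc (∑' i : ↥E, π ↑i * ∑' w : Fin (n + 2) → ↥Eᶜ,
          P ↑i ↑(w 0) * (∏ k : Fin (n + 1), P ↑(w k.castSucc) ↑(w k.succ)) *
            f (w (Fin.last (n + 1))))
        = ∑' i : ↥E, π ↑i * ∑' w' : Fin (n + 1) → ↥Eᶜ,
            P ↑i ↑(w' 0) * (∏ k : Fin n, P ↑(w' k.castSucc) ↑(w' k.succ)) *
              ∑' v : ↥Eᶜ, P ↑(w' (Fin.last n)) ↑v * f v := by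
          refine tsum_congr fun i => ?_
          congr 1
          rw [← (Fin.snocEquiv (fun _ : Fin (n + 2) => (↥Eᶜ))).tsum_eq]
          rw [show (∑' p : (↥Eᶜ) × (Fin (n + 1) → ↥Eᶜ), _) =
            ∑' p : (↥Eᶜ) × (Fin (n + 1) → ↥Eᶜ),
              P ↑i ↑(p.2 0) * (∏ k : Fin n, P ↑(p.2 k.castSucc) ↑(p.2 k.succ)) *
                (P ↑(p.2 (Fin.last n)) ↑p.1 * f p.1) from
            tsum_congr fun p => by
              simp only [Fin.snocEquiv, Equiv.coe_fn_mk]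
              exact hsnoc ↑i p.1 p.2]
          rw [ENNReal.tsum_prod', ENNReal.tsum_comm]
          refine tsum_congr fun w' => ?_
          show (∑' a : ↥Eᶜ, (P ↑i ↑(w' 0) * ∏ k : Fin n, P ↑(w' k.castSucc) ↑(w' k.succ)) *
              (P ↑(w' (Fin.last n)) ↑a * f a)) = _
          exact ENNReal.tsum_mul_left
      _ = ∑' u : ↥Eᶜ, A P π E n u * ∑' v : ↥Eᶜ, P ↑u ↑v * f v :=
          ih fun u => ∑' v : ↥Eᶜ, P ↑u ↑v * f v
      _ = ∑' u : ↥Eᶜ, ∑' v : ↥Eᶜ, A P π E n u * (P ↑u ↑v * f v) :=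
          tsum_congr fun u => ENNReal.tsum_mul_left.symm
      _ = ∑' v : ↥Eᶜ, ∑' u : ↥Eᶜ, A P π E n u * (P ↑u ↑v * f v) := ENNReal.tsum_comm
      _ = ∑' v : ↥Eᶜ, A P π E (n + 1) v * f v := by
          refine tsum_congr fun v => ?_
          rw [show A P π E (n + 1) v = ∑' u : ↥Eᶜ, A P π E n u * P ↑u ↑v from rfl,
            ← ENNReal.tsum_mul_right]
          exact tsum_congr fun u => by ring

lemma pi_Ec (hP : ∀ i, ∑' j, P i j = 1)
    (hirr : ∀ i j : ℕ, i ≠ j → ∃ m : ℕ, 1 ≤ m ∧ ∃ x : ℕ → ℕ,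
      x 0 = i ∧ x m = j ∧ ∀ t < m, 0 < P (x t) (x (t + 1)))
    (hsum : ∑' k, π k = 1) (hstat : ∀ j, π j = ∑' i, π i * P i j)
    (hE : E.Nonempty) (v : ↥Eᶜ) : π ↑v = ∑' n, A P π E n v := by
  rw [pi_eq_tsum_add hstat v, r_eq_zero hP hirr hsum hstat hE v, add_zero]

end CenAux

open CenAux in
theorem main_id (P : ℕ → ℕ → ℝ≥0∞) (hP : ∀ i, ∑' j, P i j = 1)
    (hirr : ∀ i j : ℕ, i ≠ j → ∃ m : ℕ, 1 ≤ m ∧ ∃ x : ℕ → ℕ,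
      x 0 = i ∧ x m = j ∧ ∀ t < m, 0 < P (x t) (x (t + 1)))
    (π : ℕ → ℝ≥0∞) (hsum : ∑' k, π k = 1) (hstat : ∀ j, π j = ∑' i, π i * P i j)
    (E : Set ℕ) (hE : E.Nonempty) (j : ℕ) :
    π j = ∑' i : ↥E, π ↑i *
      (P ↑i j + ∑' (n : ℕ), ∑' (w : Fin (n + 1) → ↥Eᶜ),
        P ↑i ↑(w 0) * (∏ k : Fin n, P ↑(w k.castSucc) ↑(w k.succ)) * P ↑(w (Fin.last n)) j) := by
  have h1 : ∀ i : ↥E, π ↑i *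
      (P ↑i j + ∑' (n : ℕ), ∑' (w : Fin (n + 1) → ↥Eᶜ),
        P ↑i ↑(w 0) * (∏ k : Fin n, P ↑(w k.castSucc) ↑(w k.succ)) * P ↑(w (Fin.last n)) j)
      = π ↑i * P ↑i j + ∑' (n : ℕ), π ↑i * ∑' (w : Fin (n + 1) → ↥Eᶜ),
          P ↑i ↑(w 0) * (∏ k : Fin n, P ↑(w k.castSucc) ↑(w k.succ)) * P ↑(w (Fin.last n)) j := by
    intro i
    rw [mul_add, ENNReal.tsum_mul_left]
  rw [tsum_congr h1, ENNReal.tsum_add, ENNReal.tsum_comm]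
  have h2 : ∀ n : ℕ, (∑' i : ↥E, π ↑i * ∑' (w : Fin (n + 1) → ↥Eᶜ),
      P ↑i ↑(w 0) * (∏ k : Fin n, P ↑(w k.castSucc) ↑(w k.succ)) * P ↑(w (Fin.last n)) j)
      = ∑' v : ↥Eᶜ, A P π E n v * P ↑v j := fun n => key n fun v => P ↑v j
  rw [tsum_congr h2]
  -- now work on π j
  rw [hstat j, tsum_split E (fun i => π i * P i j)]
  congr 1
  calc (∑' v : ↥Eᶜ, π ↑v * P ↑v j)
      = ∑' v : ↥Eᶜ, ∑' n, A P π E n v * P ↑v j := by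
        refine tsum_congr fun v => ?_
        rw [pi_Ec hP hirr hsum hstat hE v, ← ENNReal.tsum_mul_right]
    _ = ∑' n, ∑' v : ↥Eᶜ, A P π E n v * P ↑v j := ENNReal.tsum_comm

/-- If `π` is a stationary probability vector of the row-stochastic irreducible chain `P`
and `E` is nonempty, then `s = ∑_{k ∈ E} π_k > 0` and `π^E_j = π_j / s` is a stationary
probability vector of the censored matrix `P^E`. -/
theorem censored_stationary_countable (P : ℕ → ℕ → ℝ≥0∞) (hP : RowStoch P)
    (hirr : Irred P)
    (π : ℕ → ℝ≥0∞) (hsum : ∑' k, π k = 1) (hstat : ∀ j, π j = ∑' i, π i * P i j)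
    (E : Set ℕ) (hE : E.Nonempty) :
    0 < ∑' k : ↥E, π ↑k ∧
      (∑' j : ↥E, π ↑j / ∑' k : ↥E, π ↑k) = 1 ∧
      ∀ j ∈ E, π j / (∑' k : ↥E, π ↑k) =
        ∑' i : ↥E, (π ↑i / ∑' k : ↥E, π ↑k) * censored P E ↑i j := by
  have hπfin : ∀ k, π k ≠ ∞ :=
    fun k => ne_top_of_le_ne_top (hsum ▸ ENNReal.one_ne_top) (ENNReal.le_tsum k)
  have hπpos : ∀ j, 0 < π j := by
    obtain ⟨k0, hk0⟩ : ∃ k, π k ≠ 0 := by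
      by_contra h
      push_neg at h
      simp only [h, tsum_zero] at hsum
      exact one_ne_zero hsum.symm
    intro j
    rcases eq_or_ne k0 j with rfl | hne
    · exact pos_iff_ne_zero.mpr hk0
    · obtain ⟨m, hm1, x, hx0, hxm, hxpos⟩ := hirr k0 j hne
      have hstep : ∀ a b : ℕ, π a * P a b ≤ π b := fun a b => by
        rw [hstat b]; exact ENNReal.le_tsum a
      have hpath : ∀ t, t ≤ m → 0 < π (x t) := by
        intro t
        induction t with
        | zero => intro _; rw [hx0]; exact pos_iff_ne_zero.mpr hk0
        | succ t ih =>
          intro ht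
          have h1 := ih (Nat.le_of_succ_le ht)
          have h2 := hxpos t (Nat.lt_of_succ_le ht)
          exact lt_of_lt_of_le (ENNReal.mul_pos h1.ne' h2.ne') (hstep (x t) (x (t + 1)))
      have := hpath m le_rfl
      rwa [hxm] at this
  obtain ⟨e0, he0⟩ := hE
  have hmem : π e0 ≤ ∑' k : ↥E, π ↑k := ENNReal.le_tsum (⟨e0, he0⟩ : ↥E)
  have hsle : (∑' k : ↥E, π ↑k) ≤ 1 := by
    rw [← hsum, CenAux.tsum_split E π]; exact le_self_add
  have hstop : (∑' k : ↥E, π ↑k) ≠ ∞ := ne_top_of_le_ne_top ENNReal.one_ne_top hsle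
  have hs0 : (∑' k : ↥E, π ↑k) ≠ 0 :=
    fun h => absurd (le_antisymm (h ▸ hmem) (zero_le)) (hπpos e0).ne'
  refine ⟨pos_iff_ne_zero.mpr hs0, ?_, ?_⟩
  · simp_rw [div_eq_mul_inv]
    rw [ENNReal.tsum_mul_right, ENNReal.mul_inv_cancel hs0 hstop]
  · intro j hj
    have hmainj : π j = ∑' i : ↥E, π ↑i * censored P E ↑i j := by
      have h := main_id P hP hirr π hsum hstat E ⟨e0, he0⟩ j
      simp only [censored]
      exact h
    rw [hmainj, div_eq_mul_inv, ← ENNReal.tsum_mul_right]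
    exact tsum_congr fun i => by simp only [div_eq_mul_inv]; ring
end

section
/- (Transitivity of censoring.) Let P : ℕ → ℕ → ℝ≥0∞ be row-stochastic and let E_2 ⊆ E_1 ⊆ ℕ be nonempty sets. Then censoring in two stages agrees with censoring in one stage: for all i, j ∈ E_2, ((P^{E_1})^{E_2}) i j = (P^{E_2}) i j, where the outer censoring is applied to the function P^{E_1} : E_1 → E_1 → ℝ≥0∞ with censoring set E_2 ⊆ E_1. -/
open scoped ENNReal

/-- Path weight: `pw P j i l` is the product of `P`-steps along the path from `i`
through the list `l` to `j`. -/
noncomputable def pw {α : Type*} (P : α → α → ℝ≥0∞) (j : α) : α → List α → ℝ≥0∞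
  | i, [] => P i j
  | i, a :: l => P i a * pw P j a l

lemma pw_append {α : Type*} (P : α → α → ℝ≥0∞) (j c : α) (xs ys : List α) :
    ∀ i, pw P j i (xs ++ c :: ys) = pw P c i xs * pw P j c ys := by
  induction xs with
  | nil => intro i; simp [pw]
  | cons a xs ih => intro i; simp [pw, ih, mul_assoc]

lemma pw_ofFn {α : Type*} (P : α → α → ℝ≥0∞) (j : α) :
    ∀ (n : ℕ) (v : Fin (n + 1) → α) (i : α),
      pw P j i (List.ofFn v) =
        P i (v 0) * (∏ k : Fin n, P (v k.castSucc) (v k.succ)) * P (v (Fin.last n)) j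
  | 0, v, i => by simp [pw, List.ofFn_succ, Fin.last]
  | (n + 1), v, i => by
    rw [List.ofFn_succ]
    show P i (v 0) * pw P j (v 0) (List.ofFn fun k : Fin (n + 1) => v k.succ) = _
    rw [pw_ofFn P j n (fun k => v k.succ) (v 0),
      Fin.prod_univ_succ (fun k : Fin (n + 1) => P (v k.castSucc) (v k.succ))]
    simp only [Fin.castSucc_zero, Fin.succ_castSucc, Fin.succ_last]
    ring

lemma censored_eq {α : Type*} (P : α → α → ℝ≥0∞) (E : Set α) (i j : α) :
    censored P E i j = ∑' l : List ↥Eᶜ, pw P j i (l.map Subtype.val) := by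
  rw [← (List.equivSigmaTuple (α := ↥Eᶜ)).symm.tsum_eq
      (fun l => pw P j i (l.map Subtype.val)),
    ENNReal.tsum_sigma'
      (fun p => pw P j i (((List.equivSigmaTuple (α := ↥Eᶜ)).symm p).map Subtype.val)),
    tsum_eq_zero_add' ENNReal.summable]
  unfold censored
  congr 1
  · rw [tsum_eq_single (fun x : Fin 0 => x.elim0)
      (by intro b hb; exact absurd (funext fun x => x.elim0) hb)]
    rfl
  · congr 1
    funext n
    congr 1
    funext w
    rw [show ((List.equivSigmaTuple (α := ↥Eᶜ)).symm ⟨n + 1, w⟩) = List.ofFn w from rfl,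
      List.map_ofFn, pw_ofFn]
    rfl

section Split

variable {γ δ : Type*}

def mark : List (γ × List δ) → List (γ ⊕ δ)
  | [] => []
  | (c, m) :: r => Sum.inl c :: (m.map Sum.inr ++ mark r)

def unmark : List (γ ⊕ δ) → List δ × List (γ × List δ)
  | [] => ([], [])
  | Sum.inl c :: w => ([], (c, (unmark w).1) :: (unmark w).2)
  | Sum.inr d :: w => (d :: (unmark w).1, (unmark w).2)

lemma unmark_map_inr_append (m : List δ) (w : List (γ ⊕ δ)) :
    unmark (m.map Sum.inr ++ w) = (m ++ (unmark w).1, (unmark w).2) := by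
  induction m with
  | nil => simp
  | cons d m ih => simp [unmark, ih]

lemma unmark_mark (r : List (γ × List δ)) : unmark (mark r) = ([], r) := by
  induction r with
  | nil => rfl
  | cons p r ih =>
    obtain ⟨c, m⟩ := p
    simp [mark, unmark, unmark_map_inr_append, ih]

def splitEquiv (γ δ : Type*) : List (γ ⊕ δ) ≃ List δ × List (γ × List δ) where
  toFun := unmark
  invFun p := p.1.map Sum.inr ++ mark p.2
  left_inv w := by
    induction w with
    | nil => rfl
    | cons x w ih => cases x <;> simp [unmark, mark] <;> simpa using ih
  right_inv p := by
    obtain ⟨m, r⟩ := p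
    simp [unmark_map_inr_append, unmark_mark]

def Tup {γ : Type u} (δ : Type v) : List γ → Type (max u v)
  | [] => PUnit
  | _ :: l => List δ × Tup δ l

instance : Unique (Tup δ ([] : List γ)) := inferInstanceAs (Unique PUnit)

def toTup : (r : List (γ × List δ)) → Σ l : List γ, Tup δ l
  | [] => ⟨[], PUnit.unit⟩
  | (c, m) :: r => ⟨c :: (toTup r).1, (m, (toTup r).2)⟩

def ofTup : (l : List γ) → Tup δ l → List (γ × List δ)
  | [], _ => []
  | c :: l, t => (c, t.1) :: ofTup l t.2

def tupEquiv (γ δ : Type*) : List (γ × List δ) ≃ Σ l : List γ, Tup δ l where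
  toFun := toTup
  invFun p := ofTup p.1 p.2
  left_inv r := by
    induction r with
    | nil => rfl
    | cons p r ih => obtain ⟨c, m⟩ := p; simp [toTup, ofTup, ih]
  right_inv p := by
    obtain ⟨l, t⟩ := p
    induction l with
    | nil => cases t; rfl
    | cons c l ih =>
      show toTup ((c, t.1) :: ofTup l t.2) = _
      rw [toTup, ih t.2]
      rfl

variable {α : Type*} (fγ : γ → α) (fδ : δ → α)

def flatT : (l : List γ) → Tup δ l → List α
  | [], _ => []
  | c :: l, t => fγ c :: (t.1.map fδ ++ flatT l t.2)

lemma flat_ofTup : ∀ (l : List γ) (t : Tup δ l),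
    (mark (ofTup l t)).map (Sum.elim fγ fδ) = flatT fγ fδ l t
  | [], _ => rfl
  | c :: l, t => by
    show (Sum.inl c :: (t.1.map Sum.inr ++ mark (ofTup l t.2))).map (Sum.elim fγ fδ) = _
    rw [List.map_cons, List.map_append, List.map_map, flat_ofTup l t.2, Sum.elim_comp_inr]
    rfl

end Split

section Main

variable (P : ℕ → ℕ → ℝ≥0∞) (E₁ E₂ : Set ℕ) (h21 : E₂ ⊆ E₁)

open Classical in
noncomputable def eSum :
    (↥({x : ↥E₁ | ↑x ∈ E₂}ᶜ) ⊕ ↥E₁ᶜ) ≃ ↥E₂ᶜ where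
  toFun := Sum.elim (fun c => ⟨↑↑c, c.2⟩) (fun d => ⟨↑d, fun h => d.2 (h21 h)⟩)
  invFun x := if h : (x : ℕ) ∈ E₁ then Sum.inl ⟨⟨↑x, h⟩, x.2⟩ else Sum.inr ⟨↑x, h⟩
  left_inv s := by
    rcases s with c | d
    · exact dif_pos (c : ↥E₁).2
    · exact dif_neg d.2
  right_inv x := by
    by_cases h : (x : ℕ) ∈ E₁
    · simp only [dif_pos h, Sum.elim_inl]
    · simp only [dif_neg h, Sum.elim_inr]

lemma eSum_coe (s : ↥({x : ↥E₁ | ↑x ∈ E₂}ᶜ) ⊕ ↥E₁ᶜ) :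
    ((eSum E₁ E₂ h21 s : ↥E₂ᶜ) : ℕ) =
      Sum.elim (fun c : ↥({x : ↥E₁ | ↑x ∈ E₂}ᶜ) => ((c : ↥E₁) : ℕ))
        (fun d : ↥E₁ᶜ => (d : ℕ)) s := by
  cases s <;> rfl

lemma claimC (j : ℕ) (hj : j ∈ E₁) :
    ∀ (l : List ↥({x : ↥E₁ | ↑x ∈ E₂}ᶜ)) (a : ↥E₁),
      (∑' m : List ↥E₁ᶜ, ∑' t : Tup ↥E₁ᶜ l,
          pw P j ↑a ((m.map Subtype.val) ++
            flatT (fun c : ↥({x : ↥E₁ | ↑x ∈ E₂}ᶜ) => ((c : ↥E₁) : ℕ)) (Subtype.val : ↥E₁ᶜ → ℕ) l t))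
        = pw (fun a b : ↥E₁ => censored P E₁ ↑a ↑b) ⟨j, hj⟩ a (l.map Subtype.val)
  | [], a => by
    refine Eq.trans (tsum_congr fun m => ?_) (censored_eq P E₁ (↑a) j).symm
    rw [tsum_eq_single (default : Tup ↥E₁ᶜ ([] : List ↥({x : ↥E₁ | ↑x ∈ E₂}ᶜ)))
      (fun b hb => absurd (Subsingleton.elim b default) hb)]
    show pw P j ↑a (m.map Subtype.val ++ []) = _
    rw [List.append_nil]
  | c :: l, a => by
    have key : ∀ (m : List ↥E₁ᶜ) (t : Tup ↥E₁ᶜ (c :: l)),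
        pw P j ↑a ((m.map Subtype.val) ++
            flatT (fun c : ↥({x : ↥E₁ | ↑x ∈ E₂}ᶜ) => ((c : ↥E₁) : ℕ)) (Subtype.val : ↥E₁ᶜ → ℕ) (c :: l) t)
        = pw P (↑↑c) ↑a (m.map Subtype.val) *
          pw P j (↑↑c) ((t.1.map Subtype.val) ++
            flatT (fun c : ↥({x : ↥E₁ | ↑x ∈ E₂}ᶜ) => ((c : ↥E₁) : ℕ)) (Subtype.val : ↥E₁ᶜ → ℕ) l t.2) := by
      intro m t
      show pw P j ↑a ((m.map Subtype.val) ++ ((↑↑c : ℕ) :: _)) = _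
      rw [pw_append]
    refine Eq.trans (tsum_congr fun m => tsum_congr fun t => key m t) ?_
    have hsplit : ∀ m : List ↥E₁ᶜ,
        (∑' t : Tup ↥E₁ᶜ (c :: l),
          pw P (↑↑c) ↑a (m.map Subtype.val) *
            pw P j (↑↑c) ((t.1.map Subtype.val) ++
              flatT (fun c : ↥({x : ↥E₁ | ↑x ∈ E₂}ᶜ) => ((c : ↥E₁) : ℕ)) (Subtype.val : ↥E₁ᶜ → ℕ) l t.2))
        = pw P (↑↑c) ↑a (m.map Subtype.val) *
            ∑' m₁ : List ↥E₁ᶜ, ∑' t₂ : Tup ↥E₁ᶜ l,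
              pw P j (↑↑c) ((m₁.map Subtype.val) ++
                flatT (fun c : ↥({x : ↥E₁ | ↑x ∈ E₂}ᶜ) => ((c : ↥E₁) : ℕ)) (Subtype.val : ↥E₁ᶜ → ℕ) l t₂) := by
      intro m
      refine (ENNReal.tsum_prod (f := fun (m₁ : List ↥E₁ᶜ) (t₂ : Tup ↥E₁ᶜ l) =>
          pw P (↑↑c) ↑a (m.map Subtype.val) *
            pw P j (↑↑c) ((m₁.map Subtype.val) ++
              flatT (fun c : ↥({x : ↥E₁ | ↑x ∈ E₂}ᶜ) => ((c : ↥E₁) : ℕ)) (Subtype.val : ↥E₁ᶜ → ℕ) l t₂))).trans ?_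
      simp only [ENNReal.tsum_mul_left]
    refine Eq.trans (tsum_congr fun m => hsplit m) ?_
    rw [ENNReal.tsum_mul_right, claimC j hj l ↑c, List.map_cons, pw, ← censored_eq]
end Main

/-- Transitivity of censoring: for nonempty `E₂ ⊆ E₁`, censoring in two stages
(first to `E₁`, then to `E₂` viewed inside `E₁`) agrees with censoring directly
to `E₂`. -/
theorem censored_transitive (P : ℕ → ℕ → ℝ≥0∞) (hP : RowStoch P)
    (E₁ E₂ : Set ℕ) (h21 : E₂ ⊆ E₁) (h1 : E₁.Nonempty) (h2 : E₂.Nonempty)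
    (i j : ℕ) (hi : i ∈ E₂) (hj : j ∈ E₂) :
    censored (fun a b : ↥E₁ => censored P E₁ ↑a ↑b) {x : ↥E₁ | ↑x ∈ E₂}
        ⟨i, h21 hi⟩ ⟨j, h21 hj⟩ =
      censored P E₂ i j := by
  classical
  set γ := ↥({x : ↥E₁ | ↑x ∈ E₂}ᶜ)
  set δ := ↥E₁ᶜ
  set fγ : γ → ℕ := fun c => ((c : ↥E₁) : ℕ) with hfγ
  set F : γ ⊕ δ → ℕ := Sum.elim fγ Subtype.val with hF
  rw [censored_eq P E₂ i j,
    ← (Equiv.listEquivOfEquiv (eSum E₁ E₂ h21)).tsum_eq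
      (fun w : List ↥E₂ᶜ => pw P j i (w.map Subtype.val))]
  have step2 : ∀ u : List (γ ⊕ δ),
      pw P j i (((Equiv.listEquivOfEquiv (eSum E₁ E₂ h21)) u).map Subtype.val)
      = pw P j i (u.map F) := by
    intro u
    show pw P j i ((u.map (eSum E₁ E₂ h21)).map Subtype.val) = _
    rw [List.map_map]
    congr 1
    exact List.map_congr_left fun s _ => eSum_coe E₁ E₂ h21 s
  rw [tsum_congr step2, ← (splitEquiv γ δ).symm.tsum_eq (fun u => pw P j i (u.map F))]
  have step3 : ∀ p : List δ × List (γ × List δ),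
      pw P j i ((((splitEquiv γ δ).symm p : List (γ ⊕ δ))).map F)
      = pw P j i (p.1.map Subtype.val ++ (mark p.2).map F) := by
    intro p
    show pw P j i ((p.1.map Sum.inr ++ mark p.2).map F) = _
    rw [List.map_append, List.map_map, hF, Sum.elim_comp_inr]
  rw [tsum_congr step3,
    ENNReal.tsum_prod (f := fun (m : List δ) (r : List (γ × List δ)) =>
      pw P j i (m.map Subtype.val ++ (mark r).map F))]
  have step5 : ∀ m : List δ,
      (∑' r : List (γ × List δ), pw P j i (m.map Subtype.val ++ (mark r).map F))
      = ∑' (l : List γ), ∑' (t : Tup δ l),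
          pw P j i (m.map Subtype.val ++ flatT fγ Subtype.val l t) := by
    intro m
    rw [← (tupEquiv γ δ).symm.tsum_eq
      (fun r => pw P j i (m.map Subtype.val ++ (mark r).map F))]
    have hsy : ∀ p : Σ l : List γ, Tup δ l,
        pw P j i (m.map Subtype.val ++ (mark ((tupEquiv γ δ).symm p)).map F)
        = pw P j i (m.map Subtype.val ++ flatT fγ Subtype.val p.1 p.2) := by
      intro p
      rw [show ((tupEquiv γ δ).symm p) = ofTup p.1 p.2 from rfl, hF, flat_ofTup]
    rw [tsum_congr hsy, ENNReal.tsum_sigma' (fun p : Σ l : List γ, Tup δ l =>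
      pw P j i (m.map Subtype.val ++ flatT fγ Subtype.val p.1 p.2))]
  rw [tsum_congr step5, ENNReal.tsum_comm]
  rw [tsum_congr fun l => claimC P E₁ E₂ j (h21 hj) l ⟨i, h21 hi⟩]
  exact censored_eq (fun a b : ↥E₁ => censored P E₁ ↑a ↑b) {x : ↥E₁ | ↑x ∈ E₂}
    ⟨i, h21 hi⟩ ⟨j, h21 hj⟩
end

section
/- (Invariance of the R-measure under censoring.) Let P : ℕ → ℕ → ℝ≥0∞ be row-stochastic, and for m ≥ 1 let E_m = {1, 2, …, m}. For states 1 ≤ i ≤ j, the R-measure of a transition function M on a set containing E_j is defined by r_{i,j}(M) := (M^{E_j})_{i,j} / (1 − (M^{E_j})_{j,j}) if i < j, and r_{j,j}(M) := 1 / (1 − (M^{E_j})_{j,j}). Then for all 1 ≤ i ≤ j ≤ n, the R-measure computed from the censored chain P^{E_n} agrees with that of P: r_{i,j}(P^{E_n}) = r_{i,j}(P). -/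
open scoped ENNReal

open Classical in
/-- The R-measure of a transition function `M` relative to the censoring set `E` (playing
the role of `E_j = {1, …, j}`): `r_{i,j} = (M^{E})_{i,j} / (1 - (M^{E})_{j,j})` for
`i ≠ j`, and `r_{j,j} = 1 / (1 - (M^{E})_{j,j})`. -/
noncomputable def rMeasure {α : Type*} (M : α → α → ℝ≥0∞) (E : Set α) (i j : α) : ℝ≥0∞ :=
  if i = j then 1 / (1 - censored M E j j)
  else censored M E i j / (1 - censored M E j j)

namespace CensorAux
variable {α : Type*}

/-- Path weight: product of transition probabilities along a path from `i` to `j`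
through the intermediate stops `l`. -/
noncomputable def wt (P : α → α → ℝ≥0∞) (j : α) : α → List α → ℝ≥0∞
  | i, [] => P i j
  | i, a :: l => P i a * wt P j a l

@[simp] lemma wt_nil (P : α → α → ℝ≥0∞) (j i : α) : wt P j i [] = P i j := rfl
@[simp] lemma wt_cons (P : α → α → ℝ≥0∞) (j i a : α) (l : List α) :
    wt P j i (a :: l) = P i a * wt P j a l := rfl

lemma wt_append_cons (P : α → α → ℝ≥0∞) (j i x : α) (l1 l2 : List α) :
    wt P j i (l1 ++ x :: l2) = wt P x i l1 * wt P j x l2 := by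
  induction l1 generalizing i with
  | nil => simp
  | cons a l1 ih => simp [ih, mul_assoc]

lemma wt_comp {β : Type*} (P : α → α → ℝ≥0∞) (e : β → α) (j i : β) (l : List β) :
    wt (fun a b => P (e a) (e b)) j i l = wt P (e j) (e i) (l.map e) := by
  induction l generalizing i with
  | nil => rfl
  | cons a l ih => simp [ih]

lemma wt_ofFn (P : α → α → ℝ≥0∞) (j i : α) : ∀ (n : ℕ) (w : Fin (n + 1) → α),
    wt P j i (List.ofFn w) =
      P i (w 0) * (∏ k : Fin n, P (w k.castSucc) (w k.succ)) * P (w (Fin.last n)) j := by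
  intro n
  induction n generalizing i with
  | zero => intro w; simp [wt]
  | succ n ih =>
    intro w
    rw [List.ofFn_succ, wt_cons, ih (w 0) (fun k => w k.succ), Fin.prod_univ_succ]
    simp only [Function.comp, Fin.succ_castSucc, Fin.succ_last, Fin.castSucc_zero]
    ring

/-- The censored kernel as a sum over lists of taboo states. -/
lemma censored_eq_tsum_list (P : α → α → ℝ≥0∞) (E : Set α) (i j : α) :
    censored P E i j = ∑' l : List ↥Eᶜ, wt P j i (l.map Subtype.val) := by
  rw [← (List.equivSigmaTuple (α := ↥Eᶜ)).symm.tsum_eq, ENNReal.tsum_sigma',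
    tsum_eq_zero_add' ENNReal.summable]
  simp only [List.equivSigmaTuple_symm_apply]
  have h0 : ∑' (f : Fin 0 → ↥Eᶜ), wt P j i ((List.ofFn f).map Subtype.val) = P i j := by
    rw [tsum_eq_single (fun k => k.elim0)
      (by intro f hf; exact absurd (funext fun k => k.elim0) hf)]
    simp [wt]
  rw [h0, censored]
  congr 1
  apply tsum_congr; intro n
  apply tsum_congr; intro w
  rw [List.map_ofFn, wt_ofFn]
  rfl

def pairsToFun {δ ε : Type*} : List (δ × ε) → Σ L : List δ, Fin L.length → ε
  | [] => ⟨[], Fin.elim0⟩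
  | (d, c) :: ps => ⟨d :: (pairsToFun ps).1, Fin.cons c (pairsToFun ps).2⟩

def pairsInv {δ ε : Type*} : (L : List δ) → (Fin L.length → ε) → List (δ × ε)
  | [], _ => []
  | d :: L, f => (d, f (0 : Fin (L.length + 1))) :: pairsInv L (fun k => f k.succ)

def pairsEquiv {δ ε : Type*} : List (δ × ε) ≃ (Σ L : List δ, Fin L.length → ε) where
  toFun := pairsToFun
  invFun σ := pairsInv σ.1 σ.2
  left_inv := by
    intro ps
    induction ps with
    | nil => rfl
    | cons q ps ih =>
      obtain ⟨d, c⟩ := q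
      simpa [pairsToFun, pairsInv] using ih
  right_inv := by
    rintro ⟨L, f⟩
    induction L with
    | nil =>
      simp only [pairsInv, pairsToFun]
      congr
      exact funext fun k => k.elim0
    | cons d L ih =>
      simp only [pairsInv, pairsToFun]
      rw [ih (fun k => f k.succ)]
      exact congrArg (fun g => (⟨d :: L, g⟩ : Σ L : List _, Fin L.length → _))
        (Fin.cons_self_tail f)

variable {γ : Type*} (p : γ → Prop) [DecidablePred p]

def glue : List {x // ¬p x} × List ({x // p x} × List {x // ¬p x}) → List γ
  | (cs, ps) => cs.map Subtype.val ++ ps.flatMap (fun q => ↑q.1 :: q.2.map Subtype.val)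

def sp : List γ → List {x // ¬p x} × List ({x // p x} × List {x // ¬p x})
  | [] => ([], [])
  | b :: l =>
    if h : p b then ([], (⟨b, h⟩, (sp l).1) :: (sp l).2)
    else (⟨b, h⟩ :: (sp l).1, (sp l).2)

lemma sp_map_append (cs : List {x // ¬p x}) (r : List γ) :
    sp p (cs.map Subtype.val ++ r) = (cs ++ (sp p r).1, (sp p r).2) := by
  induction cs with
  | nil => simp
  | cons c cs ih =>
    rw [List.map_cons, List.cons_append, sp, dif_neg c.2, ih]
    rfl

def splitEquiv : List γ ≃ List {x // ¬p x} × List ({x // p x} × List {x // ¬p x}) where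
  toFun := sp p
  invFun := glue p
  left_inv := by
    intro l
    induction l with
    | nil => rfl
    | cons b l ih =>
      by_cases h : p b
      · rw [sp, dif_pos h]
        show ↑(⟨b, h⟩ : {x // p x}) :: glue p (sp p l) = b :: l
        rw [ih]
      · rw [sp, dif_neg h]
        show ↑(⟨b, h⟩ : {x // ¬p x}) :: glue p (sp p l) = b :: l
        rw [ih]
  right_inv := by
    rintro ⟨cs, ps⟩
    have key : ∀ ps : List ({x // p x} × List {x // ¬p x}),
        sp p (ps.flatMap (fun q => ↑q.1 :: q.2.map Subtype.val)) = ([], ps) := by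
      intro ps
      induction ps with
      | nil => rfl
      | cons q ps ih =>
        obtain ⟨d, cs'⟩ := q
        rw [List.flatMap_cons, List.cons_append, sp, dif_pos d.2, sp_map_append, ih]
        simp
    show sp p (cs.map Subtype.val ++ _) = _
    rw [sp_map_append, key]
    simp

def flat2 {δ ε α' : Type*} (g : δ → α') (h : ε → List α') :
    (L : List δ) → (Fin L.length → ε) → List α'
  | [], _ => []
  | d :: L, f => g d :: (h (f (0 : Fin (L.length + 1))) ++ flat2 g h L fun k => f k.succ)

lemma map_glue_pairsInv {α' : Type*} (v : γ → α')
    (cs : List {x // ¬p x}) (L : List {x // p x}) (f : Fin L.length → List {x // ¬p x}) :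
    (glue p (cs, pairsInv L f)).map v =
      cs.map (fun c => v c.val) ++
        flat2 (fun d : {x // p x} => v d.val)
          (fun l : List {x // ¬p x} => l.map (fun c => v c.val)) L f := by
  have h : ∀ (L : List {x // p x}) (f : Fin L.length → List {x // ¬p x}),
      ((pairsInv L f).flatMap (fun q => (↑q.1 : γ) :: q.2.map Subtype.val)).map v =
        flat2 (fun d : {x // p x} => v d.val)
          (fun l : List {x // ¬p x} => l.map (fun c => v c.val)) L f := by
    intro L
    induction L with
    | nil => intro f; rfl
    | cons d L ih =>
      intro f
      simp only [pairsInv, flat2, List.flatMap_cons, List.map_cons, List.map_append,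
        List.map_map, ih]
      rfl
  show (cs.map Subtype.val ++ _).map v = _
  rw [List.map_append, List.map_map, h]
  rfl

lemma tsum_list_map_eq {X Y : Type*} (e : X ≃ Y) (u : X → α) (v : Y → α)
    (huv : ∀ x, v (e x) = u x) (g : List α → ℝ≥0∞) :
    ∑' l : List X, g (l.map u) = ∑' L : List Y, g (L.map v) := by
  rw [← (Equiv.listEquivOfEquiv e).tsum_eq]
  apply tsum_congr; intro l
  congr 1
  show l.map u = (l.map e).map v
  rw [List.map_map]
  exact (congrFun (congrArg List.map (funext huv)) l).symm

variable (P : α → α → ℝ≥0∞) (A F : Set α)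

lemma tsum_wt_C (hFA : F ⊆ A) (a b : α) :
    ∑' cs : List {x : ↥Fᶜ // ¬(↑x : α) ∈ A},
        wt P b a (cs.map (fun c => c.val.val)) = censored P A a b := by
  rw [censored_eq_tsum_list]
  exact tsum_list_map_eq
    (X := {x : ↥Fᶜ // ¬(↑x : α) ∈ A}) (Y := ↥(Aᶜ))
    ⟨fun c => ⟨c.val.val, c.2⟩, fun x => ⟨⟨↑x, fun hF => x.2 (hFA hF)⟩, x.2⟩,
      fun c => rfl, fun x => rfl⟩
    (fun c => c.val.val) Subtype.val (fun x => rfl) (wt P b a)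

lemma key (hFA : F ⊆ A) (j : α) :
    ∀ (L : List {x : ↥Fᶜ // (↑x : α) ∈ A}) (a : α),
      (∑' (cs : List {x : ↥Fᶜ // ¬(↑x : α) ∈ A}),
        ∑' (f : Fin L.length → List {x : ↥Fᶜ // ¬(↑x : α) ∈ A}),
          wt P j a (cs.map (fun c => c.val.val) ++
            flat2 (fun d : {x : ↥Fᶜ // (↑x : α) ∈ A} => d.val.val)
              (fun l : List {x : ↥Fᶜ // ¬(↑x : α) ∈ A} => l.map (fun c => c.val.val)) L f))
        = wt (fun a b => censored P A a b) j a (L.map (fun d => d.val.val)) := by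
  intro L
  induction L with
  | nil =>
    intro a
    have h0 : ∀ cs : List {x : ↥Fᶜ // ¬(↑x : α) ∈ A},
        (∑' (f : Fin (List.length ([] : List {x : ↥Fᶜ // (↑x : α) ∈ A})) →
            List {x : ↥Fᶜ // ¬(↑x : α) ∈ A}),
          wt P j a (cs.map (fun c => c.val.val) ++
            flat2 (fun d : {x : ↥Fᶜ // (↑x : α) ∈ A} => d.val.val)
              (fun l : List {x : ↥Fᶜ // ¬(↑x : α) ∈ A} => l.map (fun c => c.val.val)) [] f))
          = wt P j a (cs.map (fun c => c.val.val)) := by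
      intro cs
      simp only [List.length_nil]
      rw [tsum_eq_single (fun k => Fin.elim0 k)
        (by intro f hf; exact absurd (funext fun k : Fin 0 => k.elim0) hf)]
      simp [flat2]
    rw [tsum_congr h0, tsum_wt_C P A F hFA]
    rfl
  | cons d L ih =>
    intro a
    have h1 : ∀ cs : List {x : ↥Fᶜ // ¬(↑x : α) ∈ A},
        (∑' (f : Fin (List.length (d :: L)) → List {x : ↥Fᶜ // ¬(↑x : α) ∈ A}),
          wt P j a (cs.map (fun c => c.val.val) ++
            flat2 (fun d : {x : ↥Fᶜ // (↑x : α) ∈ A} => d.val.val)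
              (fun l : List {x : ↥Fᶜ // ¬(↑x : α) ∈ A} => l.map (fun c => c.val.val)) (d :: L) f))
          = wt P d.val.val a (cs.map (fun c => c.val.val)) *
            (∑' (c0 : List {x : ↥Fᶜ // ¬(↑x : α) ∈ A}),
              ∑' (f : Fin L.length → List {x : ↥Fᶜ // ¬(↑x : α) ∈ A}),
                wt P j d.val.val (c0.map (fun c => c.val.val) ++
                  flat2 (fun d : {x : ↥Fᶜ // (↑x : α) ∈ A} => d.val.val)
                    (fun l : List {x : ↥Fᶜ // ¬(↑x : α) ∈ A} =>
                      l.map (fun c => c.val.val)) L f)) := by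
      intro cs
      simp only [List.length_cons]
      rw [← (Fin.consEquiv (fun _ : Fin (L.length + 1) =>
        List {x : ↥Fᶜ // ¬(↑x : α) ∈ A})).tsum_eq, ENNReal.tsum_prod']
      simp only [Fin.consEquiv_apply, flat2, Fin.cons_zero, Fin.cons_succ, wt_append_cons,
        ENNReal.tsum_mul_left]
    rw [tsum_congr h1, ENNReal.tsum_mul_right, tsum_wt_C P A F hFA, ih d.val.val]
    rfl

/-- Transitivity of censoring: censoring the `A`-censored chain down to `F ⊆ A`
gives the `F`-censored chain. -/
lemma censored_censored (hFA : F ⊆ A) (i j : α) (hi : i ∈ A) (hj : j ∈ A) :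
    censored (fun a b : ↥A => censored P A ↑a ↑b) {x : ↥A | (x : α) ∈ F} ⟨i, hi⟩ ⟨j, hj⟩
      = censored P F i j := by
  classical
  rw [censored_eq_tsum_list, censored_eq_tsum_list]
  have h1 : ∀ l : List ↥({x : ↥A | (x : α) ∈ F}ᶜ),
      wt (fun a b : ↥A => censored P A ↑a ↑b) ⟨j, hj⟩ ⟨i, hi⟩ (l.map Subtype.val)
      = wt (fun a b => censored P A a b) j i (l.map (fun x => x.val.val)) := by
    intro l
    rw [wt_comp (fun a b => censored P A a b) Subtype.val ⟨j, hj⟩ ⟨i, hi⟩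
      (l.map Subtype.val), List.map_map]
    rfl
  rw [tsum_congr h1]
  have hL : ∑' l : List ↥({x : ↥A | (x : α) ∈ F}ᶜ),
      wt (fun a b => censored P A a b) j i (l.map (fun x => x.val.val))
      = ∑' L : List {x : ↥Fᶜ // (↑x : α) ∈ A},
          wt (fun a b => censored P A a b) j i (L.map (fun d => d.val.val)) :=
    tsum_list_map_eq
      (X := ↥({x : ↥A | (x : α) ∈ F}ᶜ)) (Y := {x : ↥Fᶜ // (↑x : α) ∈ A})
      ⟨fun x => ⟨⟨x.val.val, x.2⟩, x.1.2⟩, fun d => ⟨⟨d.val.val, d.2⟩, d.1.2⟩,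
        fun x => rfl, fun d => rfl⟩
      (fun x => x.val.val) (fun d => d.val.val) (fun x => rfl) _
  rw [hL]
  set p : ↥Fᶜ → Prop := fun x => (↑x : α) ∈ A with hp
  calc ∑' L : List {x : ↥Fᶜ // (↑x : α) ∈ A},
        wt (fun a b => censored P A a b) j i (L.map (fun d => d.val.val))
      = ∑' L : List {x // p x}, ∑' cs : List {x // ¬p x},
          ∑' f : Fin L.length → List {x // ¬p x},
            wt P j i (cs.map (fun c => c.val.val) ++
              flat2 (fun d : {x // p x} => d.val.val)
                (fun l : List {x // ¬p x} => l.map (fun c => c.val.val)) L f) :=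
        tsum_congr fun L => (key P A F hFA j L i).symm
    _ = ∑' cs : List {x // ¬p x}, ∑' L : List {x // p x},
          ∑' f : Fin L.length → List {x // ¬p x},
            wt P j i (cs.map (fun c => c.val.val) ++
              flat2 (fun d : {x // p x} => d.val.val)
                (fun l : List {x // ¬p x} => l.map (fun c => c.val.val)) L f) :=
        ENNReal.tsum_comm
    _ = ∑' cs : List {x // ¬p x}, ∑' σ : (Σ L : List {x // p x}, Fin L.length → List {x // ¬p x}),
          wt P j i ((glue p (cs, pairsInv σ.1 σ.2)).map Subtype.val) := by
        refine tsum_congr fun cs => ?_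
        refine Eq.trans ((ENNReal.tsum_sigma'
          (fun σ : (Σ L : List {x // p x}, Fin L.length → List {x // ¬p x}) =>
            wt P j i (cs.map (fun c => c.val.val) ++
              flat2 (fun d : {x // p x} => d.val.val)
                (fun l : List {x // ¬p x} => l.map (fun c => c.val.val)) σ.1 σ.2))).symm)
          (tsum_congr fun σ => ?_)
        exact (congrArg (wt P j i) (map_glue_pairsInv p Subtype.val cs σ.1 σ.2)).symm
    _ = ∑' cs : List {x // ¬p x}, ∑' ps : List ({x // p x} × List {x // ¬p x}),
          wt P j i ((glue p (cs, ps)).map Subtype.val) :=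
        tsum_congr fun cs => pairsEquiv.symm.tsum_eq
          (fun ps => wt P j i ((glue p (cs, ps)).map Subtype.val))
    _ = ∑' x : List {x // ¬p x} × List ({x // p x} × List {x // ¬p x}),
          wt P j i ((glue p x).map Subtype.val) := (ENNReal.tsum_prod' (f := fun x => wt P j i ((glue p x).map Subtype.val))).symm
    _ = ∑' l : List ↥Fᶜ, wt P j i (l.map Subtype.val) := (splitEquiv p).symm.tsum_eq
          (fun l => wt P j i (l.map Subtype.val))

end CensorAux

/-- Invariance of the R-measure under censoring. -/
theorem rMeasure_invariant (P : ℕ → ℕ → ℝ≥0∞) (hP : RowStoch P)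
    (n i j : ℕ) (h1 : 1 ≤ i) (hij : i ≤ j) (hjn : j ≤ n) :
    rMeasure (fun a b : ↥(Set.Icc 1 n) => censored P (Set.Icc 1 n) ↑a ↑b)
        {x : ↥(Set.Icc 1 n) | ↑x ∈ Set.Icc 1 j}
        ⟨i, ⟨h1, hij.trans hjn⟩⟩ ⟨j, ⟨h1.trans hij, hjn⟩⟩ =
      rMeasure P (Set.Icc 1 j) i j := by
  have hsub : Set.Icc 1 j ⊆ Set.Icc 1 n := Set.Icc_subset_Icc le_rfl hjn
  have hij' : censored (fun a b : ↥(Set.Icc 1 n) => censored P (Set.Icc 1 n) ↑a ↑b)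
      {x : ↥(Set.Icc 1 n) | ↑x ∈ Set.Icc 1 j}
      ⟨i, ⟨h1, hij.trans hjn⟩⟩ ⟨j, ⟨h1.trans hij, hjn⟩⟩ = censored P (Set.Icc 1 j) i j :=
    CensorAux.censored_censored P (Set.Icc 1 n) (Set.Icc 1 j) hsub i j _ _
  have hjj' : censored (fun a b : ↥(Set.Icc 1 n) => censored P (Set.Icc 1 n) ↑a ↑b)
      {x : ↥(Set.Icc 1 n) | ↑x ∈ Set.Icc 1 j}
      ⟨j, ⟨h1.trans hij, hjn⟩⟩ ⟨j, ⟨h1.trans hij, hjn⟩⟩ = censored P (Set.Icc 1 j) j j :=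
    CensorAux.censored_censored P (Set.Icc 1 n) (Set.Icc 1 j) hsub j j _ _
  by_cases h : i = j
  · subst h
    simp only [rMeasure, if_pos rfl]
    rw [hjj']
  · simp only [rMeasure,
      if_neg (fun hc : (⟨i, _⟩ : ↥(Set.Icc 1 n)) = ⟨j, _⟩ => h (Subtype.mk_eq_mk.mp hc)),
      if_neg h]
    rw [hij', hjj']
    split_ifs with hc
    exact absurd (Subtype.mk_eq_mk.mp hc) h
    rfl
end

section
/- (Convergence of censored chains.) Let P : ℕ → ℕ → ℝ≥0∞ be row-stochastic, and let (E_n)_{n≥1} be a sequence of nonempty subsets of ℕ with E_n ⊆ E_{n+1} for all n and ⋃_n E_n = ℕ. Then for all states i, j, the censored transition probabilities converge to the original ones: for any i, j, eventually i, j ∈ E_n, and lim_{n → ∞} P^{E_n} i j = P i j (convergence in ℝ≥0∞). -/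
open scoped ENNReal

section aux

variable (P : ℕ → ℕ → ℝ≥0∞) (E : Set ℕ) (i j : ℕ)

/-- Probability of a path staying in `Eᶜ` for `n+1` steps. -/
noncomputable def stayProb (n : ℕ) : ℝ≥0∞ :=
  ∑' (w : Fin (n + 1) → ↥Eᶜ),
    P i ↑(w 0) * ∏ k : Fin n, P ↑(w k.castSucc) ↑(w k.succ)

lemma exit_aux (hP : RowStoch P) (hj : j ∈ E) (y : ℕ) :
    P y j + ∑' (x : ↥Eᶜ), P y ↑x ≤ 1 := by
  have h1 : ∑' (x : ↥Eᶜ), P y ↑x = ∑' z, (Eᶜ : Set ℕ).indicator (P y) z :=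
    (tsum_subtype _ _)
  have h2 : P y j = ∑' z, ({j} : Set ℕ).indicator (P y) z := by
    rw [tsum_eq_single j]
    · simp
    · intro b hb; simp [Set.indicator_of_notMem, hb]
  rw [h1, h2, ← ENNReal.tsum_add, ← hP y]
  refine ENNReal.tsum_le_tsum fun z => ?_
  by_cases hz : z = j
  · subst hz
    simp [Set.indicator, hj]
  · by_cases hz' : z ∈ (Eᶜ : Set ℕ) <;> simp [Set.indicator, hz, hz']

lemma stay_snoc (n : ℕ) :
    stayProb P E i (n + 1)
      = ∑' (w : Fin (n + 1) → ↥Eᶜ), ∑' (x : ↥Eᶜ),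
          P i ↑(w 0) * (∏ k : Fin n, P ↑(w k.castSucc) ↑(w k.succ)) * P ↑(w (Fin.last n)) ↑x := by
  classical
  set G : ↥Eᶜ → (Fin (n + 1) → ↥Eᶜ) → ℝ≥0∞ := fun x w =>
    P i ↑(w 0) * (∏ k : Fin n, P ↑(w k.castSucc) ↑(w k.succ)) * P ↑(w (Fin.last n)) ↑x with hG
  have e := Fin.snocEquiv (fun _ : Fin (n + 2) => ↥Eᶜ)
  calc stayProb P E i (n + 1)
      = ∑' (p : ↥Eᶜ × (Fin (n + 1) → ↥Eᶜ)), G p.1 p.2 := by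
        rw [stayProb, ← Equiv.tsum_eq (Fin.snocEquiv (fun _ : Fin (n + 2) => ↥Eᶜ))]
        refine tsum_congr fun p => ?_
        obtain ⟨x, w⟩ := p
        simp only [Fin.snocEquiv, Equiv.coe_fn_mk, hG]
        have h0 : (Fin.snoc w x : Fin (n + 2) → ↥Eᶜ) 0 = w 0 := by
          have h : (0 : Fin (n + 2)) = Fin.castSucc 0 := rfl
          rw [h, Fin.snoc_castSucc]
        rw [h0, Fin.prod_univ_castSucc]
        rw [← mul_assoc]
        congr 1
        · congr 1
          refine Finset.prod_congr rfl fun k _ => ?_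
          rw [Fin.succ_castSucc, Fin.snoc_castSucc, Fin.snoc_castSucc]
        · rw [Fin.succ_last, Fin.snoc_last, Fin.snoc_castSucc]
    _ = ∑' (x : ↥Eᶜ), ∑' (w : Fin (n + 1) → ↥Eᶜ), G x w := ENNReal.tsum_prod
    _ = ∑' (w : Fin (n + 1) → ↥Eᶜ), ∑' (x : ↥Eᶜ), G x w := ENNReal.tsum_comm

lemma step_aux (hP : RowStoch P) (hj : j ∈ E) (n : ℕ) :
    (∑' (w : Fin (n + 1) → ↥Eᶜ),
        P i ↑(w 0) * (∏ k : Fin n, P ↑(w k.castSucc) ↑(w k.succ)) * P ↑(w (Fin.last n)) j)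
      + stayProb P E i (n + 1) ≤ stayProb P E i n := by
  rw [stay_snoc, ← ENNReal.tsum_add, stayProb]
  refine ENNReal.tsum_le_tsum fun w => ?_
  rw [ENNReal.tsum_mul_left, ← mul_add]
  calc P i ↑(w 0) * (∏ k : Fin n, P ↑(w k.castSucc) ↑(w k.succ))
        * (P ↑(w (Fin.last n)) j + ∑' (x : ↥Eᶜ), P ↑(w (Fin.last n)) ↑x)
      ≤ P i ↑(w 0) * (∏ k : Fin n, P ↑(w k.castSucc) ↑(w k.succ)) * 1 :=
        mul_le_mul_right (exit_aux P E j hP hj _) _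
    _ = _ := mul_one _

lemma extra_le (hP : RowStoch P) (hj : j ∈ E) :
    (∑' (n : ℕ), ∑' (w : Fin (n + 1) → ↥Eᶜ),
        P i ↑(w 0) * (∏ k : Fin n, P ↑(w k.castSucc) ↑(w k.succ)) * P ↑(w (Fin.last n)) j)
      ≤ ∑' (x : ↥Eᶜ), P i ↑x := by
  have key : ∀ N : ℕ,
      (∑ n ∈ Finset.range N, ∑' (w : Fin (n + 1) → ↥Eᶜ),
        P i ↑(w 0) * (∏ k : Fin n, P ↑(w k.castSucc) ↑(w k.succ)) * P ↑(w (Fin.last n)) j)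
        + stayProb P E i N ≤ stayProb P E i 0 := by
    intro N
    induction N with
    | zero => simp
    | succ N ih =>
      calc _ = (∑ n ∈ Finset.range N, ∑' (w : Fin (n + 1) → ↥Eᶜ),
            P i ↑(w 0) * (∏ k : Fin n, P ↑(w k.castSucc) ↑(w k.succ)) * P ↑(w (Fin.last n)) j)
            + ((∑' (w : Fin (N + 1) → ↥Eᶜ),
            P i ↑(w 0) * (∏ k : Fin N, P ↑(w k.castSucc) ↑(w k.succ)) * P ↑(w (Fin.last N)) j)
            + stayProb P E i (N + 1)) := by
            rw [Finset.sum_range_succ]; ring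
        _ ≤ _ + stayProb P E i N := add_le_add_right (step_aux P E i j hP hj N) _
        _ ≤ _ := ih
  have h0 : stayProb P E i 0 = ∑' (x : ↥Eᶜ), P i ↑x := by
    rw [stayProb, ← Equiv.tsum_eq (Equiv.funUnique (Fin 1) ↥Eᶜ).symm]
    simp
  refine ENNReal.tsum_le_of_sum_range_le fun N => ?_
  rw [← h0]
  exact le_trans le_self_add (key N)

end aux

/-- Convergence of censored chains: if the nonempty censoring sets `E n` increase to the
whole state space, then every pair of states is eventually in `E n` and the censored
transition probabilities converge to the original ones. -/
theorem censored_tendsto (P : ℕ → ℕ → ℝ≥0∞) (hP : RowStoch P)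
    (E : ℕ → Set ℕ) (hne : ∀ n, (E n).Nonempty) (hmono : ∀ n, E n ⊆ E (n + 1))
    (hunion : (⋃ n, E n) = Set.univ) (i j : ℕ) :
    (∀ᶠ n in Filter.atTop, i ∈ E n ∧ j ∈ E n) ∧
      Filter.Tendsto (fun n => censored P (E n) i j) Filter.atTop (nhds (P i j)) := by
  classical
  have hEmono : Monotone E := monotone_nat_of_le_succ hmono
  have hmem : ∀ x : ℕ, ∃ a, x ∈ E a := by
    intro x
    have : x ∈ ⋃ n, E n := hunion ▸ Set.mem_univ x
    exact Set.mem_iUnion.mp this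
  obtain ⟨a, ha⟩ := hmem i
  obtain ⟨b, hb⟩ := hmem j
  have hev : ∀ᶠ n in Filter.atTop, i ∈ E n ∧ j ∈ E n := by
    filter_upwards [Filter.eventually_ge_atTop (max a b)] with n hn
    exact ⟨hEmono (le_trans (le_max_left a b) hn) ha,
      hEmono (le_trans (le_max_right a b) hn) hb⟩
  refine ⟨hev, ?_⟩
  set t : ℕ → ℝ≥0∞ := fun n => ∑' (x : ↥(E n)ᶜ), P i ↑x with ht
  have htanti : Antitone t := by
    intro m n hmn
    have hsub : (E n)ᶜ ⊆ (E m)ᶜ := Set.compl_subset_compl.mpr (hEmono hmn)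
    simp only [ht]
    rw [tsum_subtype, tsum_subtype]
    exact ENNReal.tsum_le_tsum fun z =>
      Set.indicator_le_indicator_of_subset hsub (fun _ => zero_le) z
  have hiInf : ⨅ n, t n = 0 := by
    refine le_antisymm ?_ zero_le
    refine ENNReal.le_of_forall_pos_le_add fun ε hε _ => ?_
    rw [zero_add]
    have hne1 : ∑' k, P i k ≠ ∞ := by rw [hP i]; exact ENNReal.one_ne_top
    have htail := ENNReal.tendsto_tsum_compl_atTop_zero hne1
    have hev2 : ∀ᶠ s : Finset ℕ in Filter.atTop,
        (∑' x : {x : ℕ // x ∉ s}, P i ↑x) < (ε : ℝ≥0∞) :=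
      (tendsto_order.1 htail).2 _ (ENNReal.coe_pos.2 hε)
    obtain ⟨s, hs⟩ := hev2.exists
    choose f hf using hmem
    set m := s.sup f with hm
    have hsm : ∀ x ∈ s, x ∈ E m := fun x hx => hEmono (Finset.le_sup hx) (hf x)
    refine le_trans (iInf_le _ m) (le_trans ?_ hs.le)
    have hsub : ((E m)ᶜ : Set ℕ) ⊆ {x : ℕ | x ∉ s} := by
      intro z hz hzs
      exact hz (hsm z (by simpa using hzs))
    calc t m = ∑' x : ℕ, ((E m)ᶜ : Set ℕ).indicator (P i) x := tsum_subtype _ _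
      _ ≤ ∑' x : ℕ, ({x : ℕ | x ∉ s} : Set ℕ).indicator (P i) x :=
          ENNReal.tsum_le_tsum fun z =>
            Set.indicator_le_indicator_of_subset hsub (fun _ => zero_le) z
      _ = ∑' x : ({x : ℕ | x ∉ s} : Set ℕ), P i ↑x := (tsum_subtype _ _).symm
      _ = ∑' x : {x : ℕ // x ∉ s}, P i ↑x := rfl
  have ht0 : Filter.Tendsto t Filter.atTop (nhds 0) := by
    have := tendsto_atTop_iInf htanti
    rwa [hiInf] at this
  have hsq : ∀ᶠ n in Filter.atTop,
      censored P (E n) i j ≤ P i j + t n := by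
    filter_upwards [hev] with n hn
    exact add_le_add_right (extra_le P (E n) i j hP hn.2) _
  have hlow : ∀ᶠ n in Filter.atTop, P i j ≤ censored P (E n) i j :=
    Filter.Eventually.of_forall fun n => le_self_add
  have hupper : Filter.Tendsto (fun n => P i j + t n) Filter.atTop (nhds (P i j)) := by
    have := Filter.Tendsto.const_add (P i j) ht0
    simpa using this
  exact tendsto_of_tendsto_of_tendsto_of_le_of_le' tendsto_const_nhds hupper hlow hsq
end

section
/- Let P be an N×N row-stochastic matrix (N ≥ 2) with ∑_{k=1}^{N−1} p_{N,k} > 0, let P⁽ᴺ⁻¹⁾ be the result of one GTH elimination step, and let π' = (π'_1, …, π'_{N−1}) be any nonnegative vector satisfying π'_j = ∑_{i=1}^{N−1} π'_i p⁽ᴺ⁻¹⁾_{i,j} for all 1 ≤ j ≤ N−1. Define π_N := (∑_{i=1}^{N−1} π'_i p_{i,N}) / (∑_{k=1}^{N−1} p_{N,k}). Then the extended vector (π'_1, …, π'_{N−1}, π_N) satisfies the full stationary equations of P: π_j = ∑_{i=1}^{N} π_i p_{i,j} for all 1 ≤ j ≤ N. (This justifies recovering the stationary vector of P from that of the eliminated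 chain in the GTH back substitution.) -/
/-- GTH back substitution: any nonnegative solution `π'` of the eliminated system extends,
via `π_N := (∑_{i<N} π'_i p_{i,N}) / (∑_{k<N} p_{N,k})`, to a solution of the full
stationary equations of `P`. -/
theorem gthStep_back_substitution {n : ℕ} (hn : 1 ≤ n)
    (P : Matrix (Fin (n + 1)) (Fin (n + 1)) ℝ) (hP : RowStochastic P)
    (hS : 0 < ∑ k : Fin n, P (Fin.last n) k.castSucc)
    (π' : Fin n → ℝ) (hnn : ∀ i, 0 ≤ π' i)
    (hstat : ∀ j : Fin n, π' j = ∑ i : Fin n, π' i * gthStep P i j)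
    (πfull : Fin (n + 1) → ℝ)
    (hfull : πfull = Fin.snoc π'
      ((∑ i : Fin n, π' i * P i.castSucc (Fin.last n)) /
        ∑ k : Fin n, P (Fin.last n) k.castSucc)) :
    ∀ j : Fin (n + 1), πfull j = ∑ i : Fin (n + 1), πfull i * P i j := by
  subst hfull
  set S := ∑ k : Fin n, P (Fin.last n) k.castSucc with hSdef
  have hSne : S ≠ 0 := ne_of_gt hS
  intro j
  refine Fin.lastCases ?_ ?_ j
  · rw [Fin.sum_univ_castSucc]
    simp only [Fin.snoc_castSucc, Fin.snoc_last]
    have hrow : P (Fin.last n) (Fin.last n) = 1 - S := by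
      have h := hP.2 (Fin.last n)
      rw [Fin.sum_univ_castSucc] at h
      rw [← hSdef] at h
      linarith
    rw [hrow]
    field_simp
    ring
  · intro j
    rw [Fin.sum_univ_castSucc]
    simp only [Fin.snoc_castSucc, Fin.snoc_last]
    have h := hstat j
    simp only [gthStep, ← hSdef] at h
    rw [h]
    rw [div_mul_eq_mul_div, Finset.sum_mul, Finset.sum_div, ← Finset.sum_add_distrib]
    refine Finset.sum_congr rfl fun i _ => ?_
    ring
end
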